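/- arXiv:1508.06141 — 7 statements merged into one kernel-verified Lean document; each statement's English description precedes it below -/
import Mathlib

section
/- Let σ ∈ S_n and (a,b) with a < b, (a,b) ∉ Inv(σ), and d_σ(a,b) = 0 where d_σ(a,b) = |{a < k < b : σ⁻¹(a) < σ⁻¹(k) < σ⁻¹(b)}|. If a and b are not adjacent in σ (i.e., σ⁻¹(b) ≠ σ⁻¹(a)+1), then there exists a pair (c,d) with c < d, (c,d) ∉ Inv(σ), d_σ(c,d) = 0, and either (c,d) = (d',b) with d' < a, or (c,d) = (a,p) with p > b. -/
/-- The inversion set of a permutation `σ ∈ S_n`: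
pairs `(a,b)` with `a < b` and `σ⁻¹ a > σ⁻¹ b`. -/
def InvSet {n : ℕ} (σ : Equiv.Perm (Fin n)) : Finset (Fin n × Fin n) :=
  Finset.univ.filter fun p => p.1 < p.2 ∧ σ⁻¹ p.2 < σ⁻¹ p.1

/-- Coxeter length of a permutation, i.e. its number of inversions. -/
def permLen {n : ℕ} (σ : Equiv.Perm (Fin n)) : ℕ := (InvSet σ).card

/-- `s` is a simple transposition `s_i = (i, i+1)`. -/
def IsSimpleT {n : ℕ} (s : Equiv.Perm (Fin n)) : Prop :=
  ∃ i j : Fin n, (j : ℕ) = (i : ℕ) + 1 ∧ s = Equiv.swap i j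

/-- The right weak order on `S_n`: `σ ≤_R τ` iff `τ = σ s_{i_1} ⋯ s_{i_k}`
with `ℓ(τ) = ℓ(σ) + k`. -/
def WeakLE {n : ℕ} (σ τ : Equiv.Perm (Fin n)) : Prop :=
  ∃ l : List (Equiv.Perm (Fin n)), (∀ s ∈ l, IsSimpleT s) ∧ τ = σ * l.prod ∧
    permLen τ = permLen σ + l.length

/-- The statistic `d_σ(a,b)` for `(a,b) ∉ Inv(σ)`. -/
def dStat {n : ℕ} (σ : Equiv.Perm (Fin n)) (a b : Fin n) : ℕ :=
  (Finset.univ.filter fun k : Fin n =>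
    a < k ∧ k < b ∧ σ⁻¹ a < σ⁻¹ k ∧ σ⁻¹ k < σ⁻¹ b).card

/-- if `a < b`, `(a,b) ∉ Inv(σ)`, `d_σ(a,b) = 0` and `a, b` are not
adjacent in `σ`, then there is a pair `(c,e)` with `c < e`, `(c,e) ∉ Inv(σ)`,
`d_σ(c,e) = 0`, and either `e = b` with `c < a`, or `c = a` with `e > b`. -/
theorem blocking_hook_pair {n : ℕ} (σ : Equiv.Perm (Fin n)) (a b : Fin n)
    (hab : a < b) (hinv : (a, b) ∉ InvSet σ) (hd : dStat σ a b = 0)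
    (hadj : ((σ⁻¹ b : Fin n) : ℕ) ≠ ((σ⁻¹ a : Fin n) : ℕ) + 1) :
    ∃ c e : Fin n, c < e ∧ (c, e) ∉ InvSet σ ∧ dStat σ c e = 0 ∧
      ((e = b ∧ c < a) ∨ (c = a ∧ b < e)) := by
  simp only [InvSet, Finset.mem_filter, Finset.mem_univ, true_and, not_and, not_lt] at hinv
  have hpos : σ⁻¹ a < σ⁻¹ b :=
    lt_of_le_of_ne (hinv hab) (fun h => absurd (σ⁻¹.injective h) hab.ne)
  rw [dStat, Finset.card_eq_zero, Finset.filter_eq_empty_iff] at hd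
  have hD : ∀ k : Fin n, σ⁻¹ a < σ⁻¹ k → σ⁻¹ k < σ⁻¹ b → k < a ∨ b < k := by
    intro k h1 h2
    have hk := hd (Finset.mem_univ k)
    push_neg at hk
    have hka : k ≠ a := fun h => absurd (h ▸ h1) (lt_irrefl _)
    have hkb : k ≠ b := fun h => absurd (h ▸ h2) (lt_irrefl _)
    rcases lt_or_gt_of_ne hka with h | h
    · exact Or.inl h
    · rcases lt_or_gt_of_ne hkb with h' | h'
      · exact absurd h2 (absurd h1 (by
          intro _; exact absurd (hk h h') (by push_neg; exact ⟨h1, h2⟩)))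
      · exact Or.inr h'
  set S₁ : Finset (Fin n) :=
    Finset.univ.filter (fun k => b < k ∧ σ⁻¹ a < σ⁻¹ k ∧ σ⁻¹ k < σ⁻¹ b) with hS₁
  by_cases hne : S₁.Nonempty
  · set e := S₁.min' hne with he
    have hmem := Finset.mem_filter.mp (S₁.min'_mem hne)
    obtain ⟨-, hbe, hae, heb⟩ := hmem
    refine ⟨a, e, lt_trans hab hbe, ?_, ?_, Or.inr ⟨rfl, hbe⟩⟩
    · simp only [InvSet, Finset.mem_filter, Finset.mem_univ, true_and, not_and, not_lt]
      intro _; exact le_of_lt hae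
    · rw [dStat, Finset.card_eq_zero, Finset.filter_eq_empty_iff]
      intro k _
      rintro ⟨hak, hke, h1, h2⟩
      have h2b : σ⁻¹ k < σ⁻¹ b := lt_trans h2 heb
      rcases hD k h1 h2b with h | h
      · exact absurd hak (not_lt_of_gt h)
      · have : k ∈ S₁ := by
          rw [hS₁, Finset.mem_filter]; exact ⟨Finset.mem_univ _, h, h1, h2b⟩
        exact absurd hke (not_lt_of_ge (S₁.min'_le k this))
  · -- S₁ empty; build S₂ and take max
    have hS1e : ∀ k : Fin n, σ⁻¹ a < σ⁻¹ k → σ⁻¹ k < σ⁻¹ b → k < a := by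
      intro k h1 h2
      rcases hD k h1 h2 with h | h
      · exact h
      · exact absurd ⟨k, Finset.mem_filter.mpr ⟨Finset.mem_univ k, h, h1, h2⟩⟩ hne
    set S₂ : Finset (Fin n) :=
      Finset.univ.filter (fun k => k < a ∧ σ⁻¹ a < σ⁻¹ k ∧ σ⁻¹ k < σ⁻¹ b) with hS₂
    have hlt : ((σ⁻¹ a : Fin n) : ℕ) + 1 < n := by
      have h1 : ((σ⁻¹ a : Fin n) : ℕ) + 1 ≤ ((σ⁻¹ b : Fin n) : ℕ) := hpos
      exact lt_of_le_of_lt h1 (σ⁻¹ b).isLt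
    set p : Fin n := ⟨((σ⁻¹ a : Fin n) : ℕ) + 1, hlt⟩ with hp
    have hp1 : σ⁻¹ a < p := by
      rw [Fin.lt_def]; simp [hp]
    have hp2 : p < σ⁻¹ b := by
      rw [Fin.lt_def]
      exact lt_of_le_of_ne hpos (fun h => hadj h.symm)
    have hp1' : σ⁻¹ a < σ⁻¹ (σ p) := by simpa using hp1
    have hp2' : σ⁻¹ (σ p) < σ⁻¹ b := by simpa using hp2
    have hS2ne : S₂.Nonempty :=
      ⟨σ p, Finset.mem_filter.mpr ⟨Finset.mem_univ _, hS1e _ hp1' hp2', hp1', hp2'⟩⟩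
    set c := S₂.max' hS2ne with hc
    have hmem := Finset.mem_filter.mp (S₂.max'_mem hS2ne)
    obtain ⟨-, hca, h1c, h2c⟩ := hmem
    refine ⟨c, b, lt_trans hca hab, ?_, ?_, Or.inl ⟨rfl, hca⟩⟩
    · simp only [InvSet, Finset.mem_filter, Finset.mem_univ, true_and, not_and, not_lt]
      intro _; exact le_of_lt h2c
    · rw [dStat, Finset.card_eq_zero, Finset.filter_eq_empty_iff]
      intro k _
      rintro ⟨hck, hkb, h1, h2⟩
      have h1a : σ⁻¹ a < σ⁻¹ k := lt_trans h1c h1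
      have hka : k < a := hS1e k h1a h2
      have : k ∈ S₂ := Finset.mem_filter.mpr ⟨Finset.mem_univ _, hka, h1a, h2⟩
      exact absurd hck (not_lt_of_ge (S₂.le_max' k this))
end

section
/- Let G = (V,E) be a simple acyclic digraph with a valuation θ: V → ℕ satisfying 0 ≤ θ(x) ≤ outdegree(x) for all x. A finite subset A ⊆ V is an initial section of some peeling sequence of (G,θ) if and only if: (1) for all x ∈ A, θ(x) ≤ |{y ∈ A : (x,y) ∈ E}|, and (2) for all x ∈ V∖A, θ(x) ≥ |{y ∈ A : (x,y) ∈ E}|. -/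
open scoped Classical

variable {V : Type*}

/-- A digraph is acyclic when its transitive closure is irreflexive. -/
def Acyclic (E : V → V → Prop) : Prop := ∀ x, ¬ Relation.TransGen E x x

/-- `θ` is an out-degree compatible valuation: `θ x ≤ d⁺(x)` for every vertex. -/
def IsOCV (E : V → V → Prop) (θ : V → ℕ) : Prop :=
  ∀ x, ∃ s : Finset V, (∀ y ∈ s, E x y) ∧ θ x ≤ s.card

/-- The current valuation after the vertices of `R` have been peeled. -/
noncomputable def curVal (E : V → V → Prop) (θ : V → ℕ) (R : Finset V) (x : V) : ℕ :=
  θ x - (R.filter fun y => E x y).card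

/-- `x` is erasable in the valued digraph obtained after peeling the vertices of `R`. -/
def ErasableAt (E : V → V → Prop) (θ : V → ℕ) (R : Finset V) (x : V) : Prop :=
  x ∉ R ∧ curVal E θ R x = 0 ∧ ∀ z, z ∉ R → E z x → curVal E θ R z ≠ 0

/-- `PeelFrom E θ R L`: starting from the state where `R` has been peeled, the
list `L` is a valid sequence of successive peelings. -/
def PeelFrom (E : V → V → Prop) (θ : V → ℕ) : Finset V → List V → Prop
  | _, [] => True
  | R, x :: L => ErasableAt E θ R x ∧ PeelFrom E θ (insert x R) L

/-- `A` is an initial section of some peeling sequence of the valued digraph `(G, θ)`. -/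
def IsInitialSection (E : V → V → Prop) (θ : V → ℕ) (A : Finset V) : Prop :=
  ∃ L : List V, PeelFrom E θ ∅ L ∧ L.toFinset = A

/-- In an acyclic digraph, every finite nonempty set contains a vertex with no
in-neighbour inside the set. -/
lemma exists_source {E : V → V → Prop} (hac : Acyclic E) :
    ∀ S : Finset V, S.Nonempty → ∃ x ∈ S, ∀ z ∈ S, ¬ E z x := by
  intro S
  induction S using Finset.strongInduction with
  | _ S ih =>
    rintro ⟨a, ha⟩
    by_cases h : ∀ z ∈ S, ¬ E z a
    · exact ⟨a, ha, h⟩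
    · push_neg at h
      obtain ⟨b, hb, hba⟩ := h
      have hTss : S.filter (fun z => Relation.TransGen E z a) ⊂ S :=
        Finset.filter_ssubset.mpr ⟨a, ha, fun h => hac a h⟩
      have hTne : (S.filter (fun z => Relation.TransGen E z a)).Nonempty :=
        ⟨b, Finset.mem_filter.mpr ⟨hb, .single hba⟩⟩
      obtain ⟨x, hxT, hx⟩ := ih _ hTss hTne
      refine ⟨x, (Finset.mem_filter.mp hxT).1, fun z hz hzx => ?_⟩
      exact hx z (Finset.mem_filter.mpr
        ⟨hz, .head hzx (Finset.mem_filter.mp hxT).2⟩) hzx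

/-- In an acyclic digraph, every finite nonempty set contains a vertex with no
out-neighbour inside the set. -/
lemma exists_sink {E : V → V → Prop} (hac : Acyclic E) (S : Finset V)
    (hS : S.Nonempty) : ∃ x ∈ S, ∀ z ∈ S, ¬ E x z := by
  have hac' : Acyclic (Function.swap E) := fun x hx => hac x hx.swap
  exact exists_source hac' S hS

lemma peel_notMem {E : V → V → Prop} {θ : V → ℕ} :
    ∀ (L : List V) (R : Finset V), PeelFrom E θ R L → ∀ x ∈ L, x ∉ R := by
  intro L
  induction L with
  | nil => simp
  | cons y L ih =>
    rintro R ⟨he, hp⟩ x hx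
    rcases List.mem_cons.mp hx with rfl | hx
    · exact he.1
    · exact fun hxR => ih (insert y R) hp x hx (Finset.mem_insert_of_mem hxR)

lemma fwd_aux {E : V → V → Prop} {θ : V → ℕ} :
    ∀ (L : List V) (R : Finset V), PeelFrom E θ R L →
    (∀ z ∉ R, (R.filter fun y => E z y).card ≤ θ z) →
    (∀ x ∈ L.toFinset, θ x ≤ ((R ∪ L.toFinset).filter fun y => E x y).card) ∧
    (∀ x ∉ R ∪ L.toFinset, ((R ∪ L.toFinset).filter fun y => E x y).card ≤ θ x) := by
  intro L
  induction L with
  | nil =>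
    intro R _ hinv
    simp only [List.toFinset_nil, Finset.union_empty, List.not_mem_nil]
    exact ⟨by simp, hinv⟩
  | cons y L ih =>
    rintro R ⟨he, hp⟩ hinv
    obtain ⟨hyR, hy0, hyz⟩ := he
    -- invariant for the new state
    have hinv' : ∀ z ∉ insert y R, ((insert y R).filter fun w => E z w).card ≤ θ z := by
      intro z hz
      have hzR : z ∉ R := fun h => hz (Finset.mem_insert_of_mem h)
      rw [Finset.filter_insert]
      by_cases hEzy : E z y
      · rw [if_pos hEzy, Finset.card_insert_of_notMem
          (fun h => hyR (Finset.mem_filter.mp h).1)]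
        have := hyz z hzR hEzy
        have hlt : (R.filter fun w => E z w).card < θ z :=
          Nat.lt_of_sub_ne_zero this
        omega
      · rw [if_neg hEzy]; exact hinv z hzR
    obtain ⟨ih1, ih2⟩ := ih (insert y R) hp hinv'
    have hset : insert y R ∪ L.toFinset = R ∪ (y :: L).toFinset := by
      simp [Finset.insert_union, Finset.union_insert]
    constructor
    · intro x hx
      rcases (by simpa using hx : x = y ∨ x ∈ L) with rfl | hx'
      · have h1 : θ x ≤ (R.filter fun w => E x w).card := Nat.le_of_sub_eq_zero hy0
        refine h1.trans (Finset.card_le_card (Finset.filter_subset_filter _ ?_))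
        exact Finset.subset_union_left
      · rw [← hset]; exact ih1 x (List.mem_toFinset.mpr hx')
    · intro x hx
      rw [← hset]
      exact ih2 x (by rw [hset]; exact hx)

lemma bwd_aux {E : V → V → Prop} {θ : V → ℕ} (hac : Acyclic E) :
    ∀ (n : ℕ) (A R : Finset V), A.card = n → Disjoint R A →
    (∀ x ∈ A, θ x ≤ ((R ∪ A).filter fun y => E x y).card) →
    (∀ x ∉ R ∪ A, ((R ∪ A).filter fun y => E x y).card ≤ θ x) →
    ∃ L : List V, PeelFrom E θ R L ∧ L.toFinset = A := by
  intro n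
  induction n with
  | zero =>
    intro A R hcard _ _ _
    refine ⟨[], trivial, ?_⟩
    simpa using (Finset.card_eq_zero.mp hcard).symm
  | succ n ih =>
    intro A R hcard hdisj h1 h2
    have hAne : A.Nonempty := Finset.card_pos.mp (by omega)
    -- split the filtered cards over the disjoint union
    have hsplit : ∀ z, ((R ∪ A).filter fun y => E z y).card
        = (R.filter fun y => E z y).card + (A.filter fun y => E z y).card := by
      intro z
      rw [Finset.filter_union, Finset.card_union_of_disjoint
        (Finset.disjoint_filter_filter hdisj)]
    -- a sink of A has current value 0
    obtain ⟨m, hmA, hm⟩ := exists_sink hac A hAne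
    have hmS : θ m ≤ (R.filter fun y => E m y).card := by
      have h := h1 m hmA
      rw [hsplit] at h
      have : (A.filter fun y => E m y) = ∅ :=
        Finset.filter_eq_empty_iff.mpr (fun y hy => hm y hy)
      rw [this] at h; simpa using h
    -- choose a source among the value-0 vertices of A
    set S := A.filter (fun x => θ x ≤ (R.filter fun y => E x y).card) with hSdef
    obtain ⟨x, hxS, hxsrc⟩ := exists_source hac S ⟨m, Finset.mem_filter.mpr ⟨hmA, hmS⟩⟩
    obtain ⟨hxA, hx0⟩ := Finset.mem_filter.mp hxS
    have hxR : x ∉ R := fun h => (Finset.disjoint_left.mp hdisj h) hxA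
    have hera : ErasableAt E θ R x := by
      refine ⟨hxR, Nat.sub_eq_zero_of_le hx0, fun z hzR hEzx => ?_⟩
      by_cases hzA : z ∈ A
      · intro hcv
        have hz0 : θ z ≤ (R.filter fun y => E z y).card := Nat.le_of_sub_eq_zero hcv
        exact hxsrc z (Finset.mem_filter.mpr ⟨hzA, hz0⟩) hEzx
      · have hzRA : z ∉ R ∪ A := by
          simp [Finset.mem_union, hzR, hzA]
        have h := h2 z hzRA
        rw [hsplit] at h
        have hpos : 0 < (A.filter fun y => E z y).card :=
          Finset.card_pos.mpr ⟨x, Finset.mem_filter.mpr ⟨hxA, hEzx⟩⟩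
        exact Nat.sub_ne_zero_of_lt (by omega)
    -- recurse on A.erase x with insert x R
    have hsetEq : insert x R ∪ A.erase x = R ∪ A := by
      ext w
      by_cases hw : w = x <;> simp [hw, hxA]
    have hdisj' : Disjoint (insert x R) (A.erase x) := by
      rw [Finset.disjoint_insert_left]
      exact ⟨Finset.notMem_erase x A, hdisj.mono_right (Finset.erase_subset x A)⟩
    obtain ⟨L, hL, hLA⟩ := ih (A.erase x) (insert x R)
      (by rw [Finset.card_erase_of_mem hxA, hcard]; rfl) hdisj'
      (fun w hw => by rw [hsetEq]; exact h1 w (Finset.mem_of_mem_erase hw))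
      (fun w hw => by rw [hsetEq]; exact h2 w (by rwa [hsetEq] at hw))
    refine ⟨x :: L, ⟨hera, hL⟩, ?_⟩
    rw [List.toFinset_cons, hLA, Finset.insert_erase hxA]

/-- a finite set `A` is an initial section of a peeling sequence of a
valued digraph `(G,θ)` iff (1) `θ x ≤ #{y ∈ A : x → y}` for `x ∈ A` and
(2) `θ x ≥ #{y ∈ A : x → y}` for `x ∉ A`. -/
theorem isInitialSection_iff (E : V → V → Prop) (θ : V → ℕ)
    (hac : Acyclic E) (hocv : IsOCV E θ) (A : Finset V) :
    IsInitialSection E θ A ↔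
      ((∀ x ∈ A, θ x ≤ (A.filter fun y => E x y).card) ∧
        ∀ x ∉ A, (A.filter fun y => E x y).card ≤ θ x) := by
  constructor
  · rintro ⟨L, hL, rfl⟩
    have h := fwd_aux L ∅ hL (by simp)
    simpa using h
  · rintro ⟨h1, h2⟩
    obtain ⟨L, hL, hLA⟩ := bwd_aux hac A.card A ∅ rfl (Finset.disjoint_empty_left A)
      (by simpa using h1) (by simpa using h2)
    exact ⟨L, hL, hLA⟩
end

section
/- Let (G,θ) be a valued digraph and let S be a nonempty collection of initial sections with X = ⋂_{A∈S} A. If there exists x ∈ X with θ(x) = 0, then there exists z ∈ X which is erasable in (G,θ), i.e., θ(z) = 0 and every in-neighbor y of z has θ(y) ≠ 0. -/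
open scoped Classical

variable {V : Type*}

lemma curVal_zero' (E : V → V → Prop) (θ : V → ℕ) (R : Finset V) {y : V} (h : θ y = 0) :
    curVal E θ R y = 0 := by simp [curVal, h]

lemma peel_mem (E : V → V → Prop) (θ : V → ℕ) :
    ∀ (L : List V) (R : Finset V), PeelFrom E θ R L → ∀ z ∈ L, ∀ y, E y z → θ y = 0 →
      y ∈ R ∨ y ∈ L.toFinset
  | [], _, _, z, hz => by simp at hz
  | a :: L, R, h, z, hz => by
    intro y hE hy
    rcases h with ⟨he, hrest⟩
    rcases List.mem_cons.1 hz with rfl | hz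
    · by_cases hyR : y ∈ R
      · exact Or.inl hyR
      · exact absurd (curVal_zero' E θ R hy) (he.2.2 y hyR hE)
    · rcases peel_mem E θ L (insert a R) hrest z hz y hE hy with hyR | hyL
      · rcases Finset.mem_insert.1 hyR with rfl | h'
        · exact Or.inr (by simp)
        · exact Or.inl h'
      · exact Or.inr (by simp [hyL])

lemma initial_closed (E : V → V → Prop) (θ : V → ℕ) {A : Finset V}
    (hA : IsInitialSection E θ A) {z y : V} (hz : z ∈ A) (hE : E y z) (hy : θ y = 0) :
    y ∈ A := by
  obtain ⟨L, hL, rfl⟩ := hA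
  rcases peel_mem E θ L ∅ hL z (List.mem_toFinset.1 hz) y hE hy with h | h
  · simp at h
  · exact h

/-- if `S` is a nonempty collection of initial sections whose
intersection `X` contains a vertex of valuation `0`, then `X` contains a vertex
which is erasable in `(G,θ)`. -/
theorem exists_erasable_in_intersection (E : V → V → Prop) (θ : V → ℕ)
    (hac : Acyclic E) (hocv : IsOCV E θ) (S : Set (Finset V)) (hSne : S.Nonempty)
    (hS : ∀ A ∈ S, IsInitialSection E θ A)
    (x : V) (hx : ∀ A ∈ S, x ∈ A) (hθx : θ x = 0) :
    ∃ z : V, (∀ A ∈ S, z ∈ A) ∧ θ z = 0 ∧ ∀ y, E y z → θ y ≠ 0 := by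

  obtain ⟨A₀, hA₀⟩ := hSne
  set T : Finset V := A₀.filter (fun z => θ z = 0 ∧ ∀ A ∈ S, z ∈ A) with hT
  have hxT : x ∈ T := by
    simp only [hT, Finset.mem_filter]
    exact ⟨hx A₀ hA₀, hθx, hx⟩
  obtain ⟨z, hzT, hzmax⟩ := Finset.exists_max_image T
    (fun z => (A₀.filter fun w => Relation.TransGen E z w).card) ⟨x, hxT⟩
  simp only [hT, Finset.mem_filter] at hzT
  obtain ⟨hzA₀, hz0, hzall⟩ := hzT
  refine ⟨z, hzall, hz0, ?_⟩
  intro y hE hy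
  have hyall : ∀ A ∈ S, y ∈ A := fun A hA =>
    initial_closed E θ (hS A hA) (hzall A hA) hE hy
  have hyT : y ∈ T := by
    simp only [hT, Finset.mem_filter]
    exact ⟨hyall A₀ hA₀, hy, hyall⟩
  have hsub : (A₀.filter fun w => Relation.TransGen E z w) ⊂
      (A₀.filter fun w => Relation.TransGen E y w) := by
    constructor
    · intro w hw
      simp only [Finset.mem_filter] at hw ⊢
      exact ⟨hw.1, Relation.TransGen.head hE hw.2⟩
    · intro hcon
      have hzmem : z ∈ A₀.filter fun w => Relation.TransGen E y w := by
        simp only [Finset.mem_filter]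
        exact ⟨hzA₀, Relation.TransGen.single hE⟩
      have := hcon hzmem
      simp only [Finset.mem_filter] at this
      exact hac z this.2
  exact absurd (hzmax y hyT) (not_le.2 (Finset.card_lt_card hsub))
end

section
/- Define the valued digraph 𝒜 on the staircase set λ_n = {(a,b) ∈ [n]² : a < b}, with an arc from (a,b) to (c,d) iff (c,d) ≠ (a,b) and (c,d) = (a,k) or (k,b) for some a < k < b, and valuation θ(a,b) = b - a - 1. Then the initial sections of 𝒜 are exactly the inversion sets of permutations: IS(𝒜) = {Inv(σ) : σ ∈ S_n}. -/
open scoped Classical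

variable {V : Type*}

/-- The staircase diagram `λ_n = {(a,b) : a < b}`. -/
def Lam (n : ℕ) := {p : Fin n × Fin n // p.1 < p.2}

/-- Arcs of the staircase valued digraph `𝒜`: from `(a,b)` to the boxes
`(a,k)` and `(k,b)` of the hook based on `(a,b)`, for `a < k < b`. -/
def lamE {n : ℕ} (p q : Lam n) : Prop :=
  p ≠ q ∧ ((q.1.1 = p.1.1 ∧ q.1.2 < p.1.2) ∨ (q.1.2 = p.1.2 ∧ p.1.1 < q.1.1))

/-- Valuation of the staircase valued digraph: `θ(a,b) = b - a - 1`. -/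
def lamTheta {n : ℕ} (p : Lam n) : ℕ := (p.1.2 : ℕ) - (p.1.1 : ℕ) - 1

instance {n : ℕ} : Fintype (Lam n) := Subtype.fintype _

/-- The inversion set of `σ ∈ S_n`, as a set of boxes of the staircase diagram. -/
def invLam {n : ℕ} (σ : Equiv.Perm (Fin n)) : Finset (Lam n) :=
  Finset.univ.filter fun p => σ⁻¹ p.1.2 < σ⁻¹ p.1.1

theorem Equiv.Perm.inv_apply_self {α : Type*} (f : Equiv.Perm α) (x : α) : f⁻¹ (f x) = x :=
  Equiv.symm_apply_apply f x

theorem Equiv.Perm.apply_inv_self {α : Type*} (f : Equiv.Perm α) (x : α) : f (f⁻¹ x) = x :=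
  Equiv.apply_symm_apply f x

section Helpers
variable {n : ℕ}

lemma mem_invLam {σ : Equiv.Perm (Fin n)} {p : Lam n} :
    p ∈ invLam σ ↔ σ⁻¹ p.1.2 < σ⁻¹ p.1.1 := by
  simp [invLam]

lemma curVal_eq (E : Lam n → Lam n → Prop) (θ : Lam n → ℕ) (R : Finset (Lam n)) (x : Lam n) :
    curVal E θ R x = θ x - (R.filter fun y => E x y).card := rfl

lemma swap_lt {j j' u v : Fin n} (hj : (j' : ℕ) = j + 1) :
    Equiv.swap j j' u < Equiv.swap j j' v ↔
      ((u < v ∧ ¬(u = j ∧ v = j')) ∨ (u = j' ∧ v = j)) := by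
  simp only [Equiv.swap_apply_def]
  split_ifs <;>
    simp only [Fin.lt_def, Fin.ext_iff, not_and, ne_eq] at * <;> omega

lemma lamE_cases {p q : Lam n} (h : lamE p q) :
    (q.1.1 = p.1.1 ∧ p.1.1 < q.1.2 ∧ q.1.2 < p.1.2) ∨
    (q.1.2 = p.1.2 ∧ p.1.1 < q.1.1 ∧ q.1.1 < p.1.2) := by
  obtain ⟨hne, h | h⟩ := h
  · exact Or.inl ⟨h.1, h.1 ▸ q.2, h.2⟩
  · exact Or.inr ⟨h.1, h.2, h.1 ▸ q.2⟩

lemma lamE_left {p : Lam n} {k : Fin n} (h1 : p.1.1 < k) (h2 : k < p.1.2) :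
    lamE p ⟨(p.1.1, k), h1⟩ := by
  refine ⟨fun h => ?_, Or.inl ⟨rfl, h2⟩⟩
  have := congrArg (fun q : Lam n => q.1.2) h
  simp only at this
  exact absurd this (ne_of_gt h2)

lemma lamE_right {p : Lam n} {k : Fin n} (h1 : p.1.1 < k) (h2 : k < p.1.2) :
    lamE p ⟨(k, p.1.2), h2⟩ := by
  refine ⟨fun h => ?_, Or.inr ⟨rfl, h1⟩⟩
  have := congrArg (fun q : Lam n => q.1.1) h
  simp only at this
  exact absurd this (ne_of_lt h1)

/-- the projection from the hook of `p` to the index `k`. -/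
noncomputable def hkIdx (p : Lam n) (q : Lam n) : Fin n :=
  if q.1.1 = p.1.1 then q.1.2 else q.1.1

lemma hkIdx_maps {τ : Equiv.Perm (Fin n)} {p : Lam n} :
    ∀ q ∈ (invLam τ).filter fun q => lamE p q, hkIdx p q ∈ Finset.Ioo p.1.1 p.1.2 := by
  intro q hq
  rw [Finset.mem_filter] at hq
  rcases lamE_cases hq.2 with ⟨h1, h2, h3⟩ | ⟨h1, h2, h3⟩
  · rw [hkIdx, if_pos h1, Finset.mem_Ioo]; exact ⟨h2, h3⟩
  · rw [hkIdx, if_neg (ne_of_gt h2), Finset.mem_Ioo]; exact ⟨h2, h3⟩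

lemma hkIdx_inj {τ : Equiv.Perm (Fin n)} {p : Lam n} (hp : p ∉ invLam τ) :
    Set.InjOn (hkIdx p) ((invLam τ).filter fun q => lamE p q) := by
  intro q hq q' hq' heq
  simp only [Finset.coe_filter, Set.mem_setOf_eq] at hq hq'
  have hmq := mem_invLam.mp hq.1
  have hmq' := mem_invLam.mp hq'.1
  rcases lamE_cases hq.2 with ⟨h1, h2, h3⟩ | ⟨h1, h2, h3⟩ <;>
    rcases lamE_cases hq'.2 with ⟨g1, g2, g3⟩ | ⟨g1, g2, g3⟩
  · rw [hkIdx, if_pos h1, hkIdx, if_pos g1] at heq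
    exact Subtype.ext (Prod.ext (h1.trans g1.symm) heq)
  · rw [hkIdx, if_pos h1, hkIdx, if_neg (ne_of_gt g2)] at heq
    exfalso; apply hp; rw [mem_invLam]
    rw [h1] at hmq; rw [g1] at hmq'; rw [heq] at hmq
    exact lt_trans hmq' hmq
  · rw [hkIdx, if_neg (ne_of_gt h2), hkIdx, if_pos g1] at heq
    exfalso; apply hp; rw [mem_invLam]
    rw [h1] at hmq; rw [g1] at hmq'; rw [heq] at hmq
    exact lt_trans hmq hmq'
  · rw [hkIdx, if_neg (ne_of_gt h2), hkIdx, if_neg (ne_of_gt g2)] at heq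
    exact Subtype.ext (Prod.ext heq (h1.trans g1.symm))

lemma card_hook_le {τ : Equiv.Perm (Fin n)} {p : Lam n} (hp : p ∉ invLam τ) :
    ((invLam τ).filter fun q => lamE p q).card ≤ (p.1.2 : ℕ) - p.1.1 - 1 := by
  have := Finset.card_le_card_of_injOn (hkIdx p) hkIdx_maps (hkIdx_inj hp)
  rwa [Fin.card_Ioo] at this

lemma card_hook_ge {τ : Equiv.Perm (Fin n)} {p : Lam n}
    (hcond : ∀ k : Fin n, p.1.1 < k → k < p.1.2 →
      τ⁻¹ k < τ⁻¹ p.1.1 ∨ τ⁻¹ p.1.2 < τ⁻¹ k) :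
    (p.1.2 : ℕ) - p.1.1 - 1 ≤ ((invLam τ).filter fun q => lamE p q).card := by
  have := Finset.card_le_card_of_surjOn (hkIdx p)
    (s := (invLam τ).filter fun q => lamE p q) (t := Finset.Ioo p.1.1 p.1.2) ?_
  · rwa [Fin.card_Ioo] at this
  intro k hk
  rw [Finset.coe_Ioo, Set.mem_Ioo] at hk
  obtain ⟨h1, h2⟩ := hk
  rcases hcond k h1 h2 with hc | hc
  · refine ⟨⟨(p.1.1, k), h1⟩, ?_, ?_⟩
    · simp only [Finset.coe_filter, Set.mem_setOf_eq]
      exact ⟨mem_invLam.mpr hc, lamE_left h1 h2⟩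
    · exact if_pos rfl
  · refine ⟨⟨(k, p.1.2), h2⟩, ?_, ?_⟩
    · simp only [Finset.coe_filter, Set.mem_setOf_eq]
      exact ⟨mem_invLam.mpr hc, lamE_right h1 h2⟩
    · exact if_neg (ne_of_gt h1)

lemma hook_surj {τ : Equiv.Perm (Fin n)} {p : Lam n} (hp : p ∉ invLam τ)
    (hcard : (p.1.2 : ℕ) - p.1.1 - 1 ≤ ((invLam τ).filter fun q => lamE p q).card) :
    ∀ k : Fin n, p.1.1 < k → k < p.1.2 → τ⁻¹ k < τ⁻¹ p.1.1 ∨ τ⁻¹ p.1.2 < τ⁻¹ k := by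
  intro k h1 h2
  have himg : ((invLam τ).filter fun q => lamE p q).image (hkIdx p) = Finset.Ioo p.1.1 p.1.2 := by
    apply Finset.eq_of_subset_of_card_le
    · intro x hx
      rw [Finset.mem_image] at hx
      obtain ⟨q, hq, rfl⟩ := hx
      exact hkIdx_maps q hq
    · rw [Finset.card_image_of_injOn (hkIdx_inj hp), Fin.card_Ioo]
      exact hcard
  have hk : k ∈ ((invLam τ).filter fun q => lamE p q).image (hkIdx p) := by
    rw [himg, Finset.mem_Ioo]; exact ⟨h1, h2⟩
  rw [Finset.mem_image] at hk
  obtain ⟨q, hq, hqk⟩ := hk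
  rw [Finset.mem_filter] at hq
  have hmq := mem_invLam.mp hq.1
  rcases lamE_cases hq.2 with ⟨g1, g2, g3⟩ | ⟨g1, g2, g3⟩
  · rw [hkIdx, if_pos g1] at hqk
    left; rw [← hqk, ← g1]; exact hmq
  · rw [hkIdx, if_neg (ne_of_gt g2)] at hqk
    right; rw [← hqk, ← g1]; exact hmq

lemma card_hook_lt {τ : Equiv.Perm (Fin n)} {p : Lam n} (hp : p ∉ invLam τ) {k0 : Fin n}
    (h1 : p.1.1 < k0) (h2 : k0 < p.1.2)
    (ha : τ⁻¹ p.1.1 < τ⁻¹ k0) (hb : τ⁻¹ k0 < τ⁻¹ p.1.2) :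
    ((invLam τ).filter fun q => lamE p q).card < (p.1.2 : ℕ) - p.1.1 - 1 := by
  have hmaps : ∀ q ∈ (invLam τ).filter fun q => lamE p q,
      hkIdx p q ∈ (Finset.Ioo p.1.1 p.1.2).erase k0 := by
    intro q hq
    rw [Finset.mem_erase]
    refine ⟨?_, hkIdx_maps q hq⟩
    intro hqk
    rw [Finset.mem_filter] at hq
    have hmq := mem_invLam.mp hq.1
    rcases lamE_cases hq.2 with ⟨g1, g2, g3⟩ | ⟨g1, g2, g3⟩
    · rw [hkIdx, if_pos g1] at hqk
      rw [hqk, g1] at hmq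
      exact absurd hmq (asymm ha)
    · rw [hkIdx, if_neg (ne_of_gt g2)] at hqk
      rw [hqk, g1] at hmq
      exact absurd hmq (asymm hb)
  have := Finset.card_le_card_of_injOn (hkIdx p) hmaps (hkIdx_inj hp)
  have hcerase : ((Finset.Ioo p.1.1 p.1.2).erase k0).card = (p.1.2 : ℕ) - p.1.1 - 1 - 1 := by
    rw [Finset.card_erase_of_mem (Finset.mem_Ioo.mpr ⟨h1, h2⟩), Fin.card_Ioo]
  have hpos : 1 ≤ (p.1.2 : ℕ) - p.1.1 - 1 := by
    have h1' := Fin.lt_def.mp h1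
    have h2' := Fin.lt_def.mp h2
    omega
  omega

lemma exists_middle {τ : Equiv.Perm (Fin n)} {p : Lam n}
    (hcard : ((invLam τ).filter fun q => lamE p q).card < (p.1.2 : ℕ) - p.1.1 - 1) :
    ∃ k : Fin n, p.1.1 < k ∧ k < p.1.2 ∧ τ⁻¹ p.1.1 < τ⁻¹ k ∧ τ⁻¹ k < τ⁻¹ p.1.2 := by
  by_contra hc
  push_neg at hc
  have hcond : ∀ k : Fin n, p.1.1 < k → k < p.1.2 →
      τ⁻¹ k < τ⁻¹ p.1.1 ∨ τ⁻¹ p.1.2 < τ⁻¹ k := by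
    intro k h1 h2
    rcases lt_or_gt_of_ne (fun h : τ⁻¹ k = τ⁻¹ p.1.1 =>
      (ne_of_gt h1) (τ⁻¹.injective h)) with h | h
    · exact Or.inl h
    · exact Or.inr (lt_of_le_of_ne (hc k h1 h2 h)
        fun h' : τ⁻¹ p.1.2 = τ⁻¹ k => (ne_of_lt h2) (τ⁻¹.injective h'.symm))
  exact absurd (card_hook_ge hcond) (by omega)

end Helpers
section Main
variable {n : ℕ}

lemma invLam_mul_swap_erase {σ : Equiv.Perm (Fin n)} {j j' : Fin n}
    (hj : (j' : ℕ) = j + 1) (hd : σ j' < σ j) :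
    invLam (σ * Equiv.swap j j') = (invLam σ).erase ⟨(σ j', σ j), hd⟩ := by
  ext q
  have hq : q.1.1 < q.1.2 := q.2
  erw [Finset.mem_erase, mem_invLam, mem_invLam]
  rw [mul_inv_rev, Equiv.swap_inv, Equiv.Perm.mul_apply, Equiv.Perm.mul_apply]
  rw [swap_lt hj]
  simp only [Equiv.Perm.inv_eq_iff_eq]
  constructor
  · rintro (⟨hlt, hne⟩ | ⟨e2, e1⟩)
    · refine ⟨fun hqp => ?_, hlt⟩
      rw [hqp] at hne
      exact hne ⟨rfl, rfl⟩
    · exfalso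
      rw [e1, e2] at hq
      exact absurd hq (asymm hd)
  · rintro ⟨hne, hlt⟩
    left
    refine ⟨hlt, fun ⟨e2, e1⟩ => hne (Subtype.ext (Prod.ext e1 e2))⟩

lemma invLam_mul_swap_insert {σ : Equiv.Perm (Fin n)} {j j' : Fin n}
    (hj : (j' : ℕ) = j + 1) (hd : σ j < σ j') :
    invLam (σ * Equiv.swap j j') = insert ⟨(σ j, σ j'), hd⟩ (invLam σ) := by
  ext q
  have hq : q.1.1 < q.1.2 := q.2
  erw [Finset.mem_insert, mem_invLam, mem_invLam]
  rw [mul_inv_rev, Equiv.swap_inv, Equiv.Perm.mul_apply, Equiv.Perm.mul_apply]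
  rw [swap_lt hj]
  simp only [Equiv.Perm.inv_eq_iff_eq]
  constructor
  · rintro (⟨hlt, hne⟩ | ⟨e2, e1⟩)
    · exact Or.inr hlt
    · exact Or.inl (Subtype.ext (Prod.ext e1 e2))
  · rintro (hqp | hlt)
    · right
      have e1 := congrArg (fun z : Lam n => z.1.1) hqp
      have e2 := congrArg (fun z : Lam n => z.1.2) hqp
      simp only at e1 e2
      exact ⟨e2, e1⟩
    · left
      refine ⟨hlt, fun ⟨e2, e1⟩ => ?_⟩
      rw [e1, e2] at hq
      exact absurd hq (asymm hd)

lemma peelFrom_append {V : Type*} {E : V → V → Prop} {θ : V → ℕ} :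
    ∀ (L1 : List V) (R : Finset V) (L2 : List V),
      PeelFrom E θ R (L1 ++ L2) ↔ PeelFrom E θ R L1 ∧ PeelFrom E θ (R ∪ L1.toFinset) L2
  | [], R, L2 => by
      simp only [List.nil_append, List.toFinset_nil, Finset.union_empty]
      exact ⟨fun h => ⟨trivial, h⟩, fun h => h.2⟩
  | x :: L1, R, L2 => by
      show (ErasableAt E θ R x ∧ PeelFrom E θ (insert x R) (L1 ++ L2)) ↔ _
      rw [peelFrom_append L1 (insert x R) L2, List.toFinset_cons, Finset.union_insert,
        ← Finset.insert_union]
      exact and_assoc.symm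

lemma exists_descent {σ : Equiv.Perm (Fin n)} (h : invLam σ ≠ ∅) :
    ∃ j j' : Fin n, (j' : ℕ) = j + 1 ∧ σ j' < σ j := by
  by_contra hc
  push_neg at hc
  apply h
  rw [Finset.eq_empty_iff_forall_notMem]
  intro q hq
  have hmono : StrictMono σ := by
    match n, σ, hc with
    | 0, σ, hc => intro a _ _; exact absurd a.isLt (by omega)
    | (m+1), σ, hc =>
      rw [Fin.strictMono_iff_lt_succ]
      intro i
      have h1 : ((i.succ : Fin (m+1)) : ℕ) = (i.castSucc : ℕ) + 1 := by simp
      have h2 := hc i.castSucc i.succ h1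
      have h3 : σ i.castSucc ≠ σ i.succ := by
        intro he
        have := σ.injective he
        have := congrArg Fin.val this
        simp at this
      exact lt_of_le_of_ne h2 h3
  have := mem_invLam.mp hq
  have := hmono this
  simp only [Equiv.Perm.apply_inv_self] at this
  exact absurd q.2 (asymm this)

end Main
section Main2
variable {n : ℕ}

lemma erasable_of_descent {σ : Equiv.Perm (Fin n)} {j j' : Fin n}
    (hj : (j' : ℕ) = j + 1) (hd : σ j' < σ j) :
    ErasableAt lamE lamTheta (invLam (σ * Equiv.swap j j')) ⟨(σ j', σ j), hd⟩ := by
  set τ := σ * Equiv.swap j j' with hτdef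
  have htau : ∀ x, τ⁻¹ x = Equiv.swap j j' (σ⁻¹ x) := fun x => by
    rw [hτdef, mul_inv_rev, Equiv.swap_inv, Equiv.Perm.mul_apply]
  have ha : τ⁻¹ (σ j') = j := by
    rw [htau, Equiv.Perm.inv_apply_self, Equiv.swap_apply_right]
  have hb : τ⁻¹ (σ j) = j' := by
    rw [htau, Equiv.Perm.inv_apply_self, Equiv.swap_apply_left]
  have hfix : ∀ x : Fin n, x ≠ σ j → x ≠ σ j' →
      τ⁻¹ x = σ⁻¹ x ∧ (σ⁻¹ x : ℕ) ≠ j ∧ (σ⁻¹ x : ℕ) ≠ j' := by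
    intro x hx1 hx2
    have e1 : σ⁻¹ x ≠ j := fun h => hx1 (by rw [← h, Equiv.Perm.apply_inv_self])
    have e2 : σ⁻¹ x ≠ j' := fun h => hx2 (by rw [← h, Equiv.Perm.apply_inv_self])
    exact ⟨by rw [htau, Equiv.swap_apply_of_ne_of_ne e1 e2],
      fun h => e1 (Fin.ext h), fun h => e2 (Fin.ext h)⟩
  have hpnot : (⟨(σ j', σ j), hd⟩ : Lam n) ∉ invLam τ := by
    refine fun hh => absurd (mem_invLam.mp hh) ?_
    show ¬ τ⁻¹ (σ j) < τ⁻¹ (σ j')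
    rw [ha, hb, Fin.lt_def, hj]
    omega
  refine ⟨hpnot, ?_, ?_⟩
  · show lamTheta _ - _ = 0
    apply Nat.sub_eq_zero_of_le
    have hcond : ∀ k : Fin n, σ j' < k → k < σ j →
        τ⁻¹ k < τ⁻¹ (σ j') ∨ τ⁻¹ (σ j) < τ⁻¹ k := by
      intro k h1 h2
      obtain ⟨e, e1, e2⟩ := hfix k (ne_of_lt h2) (ne_of_gt h1)
      rw [e, ha, hb, Fin.lt_def, Fin.lt_def]
      omega
    exact card_hook_ge (p := ⟨(σ j', σ j), hd⟩) hcond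
  · intro z hz hE
    obtain ⟨hne, hcase⟩ := hE
    rw [curVal_eq]
    rw [Ne, Nat.sub_eq_zero_iff_le, not_le]
    rcases hcase with ⟨h1, h2⟩ | ⟨h1, h2⟩
    · -- z = (σ j', d) with σ j < d
      have hz11 : z.1.1 = σ j' := h1.symm
      have hd2 : σ j < z.1.2 := h2
      have hne1 : z.1.2 ≠ σ j := ne_of_gt hd2
      have hne2 : z.1.2 ≠ σ j' := ne_of_gt (lt_trans hd hd2)
      obtain ⟨e, e1, e2⟩ := hfix z.1.2 hne1 hne2
      have hznot : ¬ τ⁻¹ z.1.2 < τ⁻¹ z.1.1 := fun hh => hz (mem_invLam.mpr hh)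
      rw [hz11, ha, e, Fin.lt_def, not_lt] at hznot
      refine card_hook_lt hz (k0 := σ j) ?_ ?_ ?_ ?_
      · rw [hz11]; exact hd
      · exact hd2
      · rw [hz11, ha, hb, Fin.lt_def]; omega
      · rw [hb, e, Fin.lt_def]; omega
    · -- z = (c, σ j) with c < σ j'
      have hz12 : z.1.2 = σ j := h1.symm
      have hc1 : z.1.1 < σ j' := h2
      have hne1 : z.1.1 ≠ σ j := ne_of_lt (lt_trans hc1 hd)
      have hne2 : z.1.1 ≠ σ j' := ne_of_lt hc1
      obtain ⟨e, e1, e2⟩ := hfix z.1.1 hne1 hne2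
      have hznot : ¬ τ⁻¹ z.1.2 < τ⁻¹ z.1.1 := fun hh => hz (mem_invLam.mpr hh)
      rw [hz12, hb, e, Fin.lt_def, not_lt] at hznot
      refine card_hook_lt hz (k0 := σ j') ?_ ?_ ?_ ?_
      · exact hc1
      · rw [hz12]; exact hd
      · rw [ha, e, Fin.lt_def]; omega
      · rw [hz12, ha, hb, Fin.lt_def]; omega

end Main2
section Main3
variable {n : ℕ}

lemma insert_erasable_invLam {σ : Equiv.Perm (Fin n)} {p : Lam n}
    (h : ErasableAt lamE lamTheta (invLam σ) p) :
    ∃ σ' : Equiv.Perm (Fin n), insert p (invLam σ) = invLam σ' := by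
  obtain ⟨hpR, hcv, hpred⟩ := h
  have hab : σ⁻¹ p.1.1 < σ⁻¹ p.1.2 := by
    rcases lt_or_gt_of_ne (fun hh : σ⁻¹ p.1.1 = σ⁻¹ p.1.2 =>
      (ne_of_lt p.2) (σ⁻¹.injective hh)) with hh | hh
    · exact hh
    · exact absurd (mem_invLam.mpr hh) hpR
  -- F1
  have F1 : ∀ k : Fin n, p.1.1 < k → k < p.1.2 →
      σ⁻¹ k < σ⁻¹ p.1.1 ∨ σ⁻¹ p.1.2 < σ⁻¹ k := by
    apply hook_surj hpR
    rw [curVal_eq] at hcv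
    exact Nat.sub_eq_zero_iff_le.mp hcv
  -- F2
  have F2 : ∀ d : Fin n, p.1.2 < d → σ⁻¹ p.1.1 < σ⁻¹ d →
      ∃ k : Fin n, p.1.1 < k ∧ k < d ∧ σ⁻¹ p.1.1 < σ⁻¹ k ∧ σ⁻¹ k < σ⁻¹ d := by
    intro d hd hpos
    have hza : p.1.1 < d := lt_trans p.2 hd
    set z : Lam n := ⟨(p.1.1, d), hza⟩ with hzdef
    have hznot : z ∉ invLam σ := by
      rw [mem_invLam]
      exact not_lt.mpr (le_of_lt hpos)
    have hEzp : lamE z p := by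
      refine ⟨fun hh => ?_, Or.inl ⟨rfl, hd⟩⟩
      have := congrArg (fun q : Lam n => q.1.2) hh
      simp only [hzdef] at this
      exact absurd this.symm (ne_of_lt hd)
    have := hpred z hznot hEzp
    rw [curVal_eq, Ne, Nat.sub_eq_zero_iff_le, not_le] at this
    exact exists_middle this
  -- F3
  have F3 : ∀ c : Fin n, c < p.1.1 → σ⁻¹ c < σ⁻¹ p.1.2 →
      ∃ k : Fin n, c < k ∧ k < p.1.2 ∧ σ⁻¹ c < σ⁻¹ k ∧ σ⁻¹ k < σ⁻¹ p.1.2 := by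
    intro c hc hpos
    have hza : c < p.1.2 := lt_trans hc p.2
    set z : Lam n := ⟨(c, p.1.2), hza⟩ with hzdef
    have hznot : z ∉ invLam σ := by
      rw [mem_invLam]
      exact not_lt.mpr (le_of_lt hpos)
    have hEzp : lamE z p := by
      refine ⟨fun hh => ?_, Or.inr ⟨rfl, hc⟩⟩
      have := congrArg (fun q : Lam n => q.1.1) hh
      simp only [hzdef] at this
      exact absurd this.symm (ne_of_gt hc)
    have := hpred z hznot hEzp
    rw [curVal_eq, Ne, Nat.sub_eq_zero_iff_le, not_le] at this
    exact exists_middle this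
  -- no middle element in the ≺ order
  have claim1 : ∀ m : ℕ, ∀ x : Fin n, (x : ℕ) - p.1.2 ≤ m → p.1.2 < x →
      σ⁻¹ p.1.1 < σ⁻¹ x → σ⁻¹ x < σ⁻¹ p.1.2 → False := by
    intro m
    induction m with
    | zero =>
      intro x hm hx _ _
      have := Fin.lt_def.mp hx
      omega
    | succ m ih =>
      intro x hm hx h1 h2
      obtain ⟨k, hk1, hk2, hk3, hk4⟩ := F2 x hx h1
      rcases lt_trichotomy k p.1.2 with hkb | hkb | hkb
      · rcases F1 k hk1 hkb with hh | hh
        · exact absurd hk3 (asymm hh)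
        · exact absurd (lt_trans hk4 h2) (asymm hh)
      · rw [hkb] at hk4
        exact absurd (lt_trans hk4 h2) (lt_irrefl _)
      · have hv1 := Fin.lt_def.mp hk2
        have hv2 := Fin.lt_def.mp hkb
        exact ih k (by omega) hkb hk3 (lt_trans hk4 h2)
  have claim2 : ∀ m : ℕ, ∀ x : Fin n, (p.1.1 : ℕ) - x ≤ m → x < p.1.1 →
      σ⁻¹ p.1.1 < σ⁻¹ x → σ⁻¹ x < σ⁻¹ p.1.2 → False := by
    intro m
    induction m with
    | zero =>
      intro x hm hx _ _
      have := Fin.lt_def.mp hx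
      omega
    | succ m ih =>
      intro x hm hx h1 h2
      obtain ⟨k, hk1, hk2, hk3, hk4⟩ := F3 x hx h2
      have hak : σ⁻¹ p.1.1 < σ⁻¹ k := lt_trans h1 hk3
      rcases lt_trichotomy k p.1.1 with hka | hka | hka
      · have hv1 := Fin.lt_def.mp hk1
        have hv2 := Fin.lt_def.mp hka
        exact ih k (by omega) hka hak hk4
      · rw [hka] at hak
        exact absurd hak (lt_irrefl _)
      · rcases F1 k hka hk2 with hh | hh
        · exact absurd hak (asymm hh)
        · exact absurd hk4 (asymm hh)
  have nomid : ∀ x : Fin n, σ⁻¹ p.1.1 < σ⁻¹ x → σ⁻¹ x < σ⁻¹ p.1.2 → False := by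
    intro x h1 h2
    rcases lt_trichotomy x p.1.1 with hx | hx | hx
    · exact claim2 _ x le_rfl hx h1 h2
    · rw [hx] at h1; exact absurd h1 (lt_irrefl _)
    · rcases lt_trichotomy x p.1.2 with hy | hy | hy
      · rcases F1 x hx hy with hh | hh
        · exact absurd h1 (asymm hh)
        · exact absurd h2 (asymm hh)
      · rw [hy] at h2; exact absurd h2 (lt_irrefl _)
      · exact claim1 _ x le_rfl hy h1 h2
  -- positions are adjacent
  have hsucc : (σ⁻¹ p.1.2 : ℕ) = (σ⁻¹ p.1.1 : ℕ) + 1 := by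
    by_contra hc
    have hv := Fin.lt_def.mp hab
    have hlt : (σ⁻¹ p.1.1 : ℕ) + 1 < (σ⁻¹ p.1.2 : ℕ) := by omega
    have hm : (σ⁻¹ p.1.1 : ℕ) + 1 < n := lt_trans hlt (σ⁻¹ p.1.2).isLt
    set x : Fin n := σ ⟨(σ⁻¹ p.1.1 : ℕ) + 1, hm⟩ with hxdef
    have hpx : σ⁻¹ x = ⟨(σ⁻¹ p.1.1 : ℕ) + 1, hm⟩ := by
      rw [hxdef, Equiv.Perm.inv_apply_self]
    exact nomid x (by rw [hpx]; exact Fin.lt_def.mpr (by simp))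
      (by rw [hpx]; exact Fin.lt_def.mpr (by simpa using hlt))
  -- conclude
  have hd' : σ (σ⁻¹ p.1.1) < σ (σ⁻¹ p.1.2) := by
    rw [Equiv.Perm.apply_inv_self, Equiv.Perm.apply_inv_self]
    exact p.2
  refine ⟨σ * Equiv.swap (σ⁻¹ p.1.1) (σ⁻¹ p.1.2), ?_⟩
  rw [invLam_mul_swap_insert hsucc hd']
  have hpp : (⟨(σ (σ⁻¹ p.1.1), σ (σ⁻¹ p.1.2)), hd'⟩ : Lam n) = p := by
    apply Subtype.ext
    apply Prod.ext
    · exact Equiv.Perm.apply_inv_self σ p.1.1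
    · exact Equiv.Perm.apply_inv_self σ p.1.2
  rw [hpp]

end Main3
section Final
variable {n : ℕ}

lemma invLam_isInitialSection (σ : Equiv.Perm (Fin n)) :
    IsInitialSection lamE lamTheta (invLam σ) := by
  have key : ∀ m : ℕ, ∀ σ : Equiv.Perm (Fin n), (invLam σ).card ≤ m →
      IsInitialSection lamE lamTheta (invLam σ) := by
    intro m
    induction m with
    | zero =>
      intro σ hc
      have : invLam σ = ∅ := Finset.card_eq_zero.mp (Nat.le_zero.mp hc)
      exact ⟨[], trivial, by rw [List.toFinset_nil, this]⟩
    | succ m ih =>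
      intro σ hc
      by_cases hemp : invLam σ = ∅
      · exact ⟨[], trivial, by rw [List.toFinset_nil, hemp]⟩
      · obtain ⟨j, j', hj, hd⟩ := exists_descent hemp
        set p : Lam n := ⟨(σ j', σ j), hd⟩ with hpdef
        have hpmem : p ∈ invLam σ := by
          rw [mem_invLam]
          show σ⁻¹ (σ j) < σ⁻¹ (σ j')
          rw [Equiv.Perm.inv_apply_self, Equiv.Perm.inv_apply_self]
          exact Fin.lt_def.mpr (by omega)
        have herase : invLam (σ * Equiv.swap j j') = (invLam σ).erase p :=
          invLam_mul_swap_erase hj hd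
        have hcard : (invLam (σ * Equiv.swap j j')).card ≤ m := by
          rw [herase, Finset.card_erase_of_mem hpmem]
          have := Finset.card_pos.mpr ⟨p, hpmem⟩
          omega
        obtain ⟨L, hL, hLt⟩ := ih _ hcard
        refine ⟨L ++ [p], ?_, ?_⟩
        · rw [peelFrom_append]
          refine ⟨hL, ?_⟩
          rw [Finset.empty_union, hLt]
          exact ⟨erasable_of_descent hj hd, trivial⟩
        · rw [List.toFinset_append, hLt, herase, List.toFinset_cons, List.toFinset_nil]
          rw [Finset.union_comm]
          simp only [Finset.insert_union, Finset.empty_union]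
          exact Finset.insert_erase hpmem
  exact key _ σ le_rfl

lemma peel_invLam : ∀ (L : List (Lam n)) (σ : Equiv.Perm (Fin n)),
    PeelFrom lamE lamTheta (invLam σ) L →
    ∃ σ' : Equiv.Perm (Fin n), invLam σ ∪ L.toFinset = invLam σ'
  | [], σ, _ => ⟨σ, by simp⟩
  | p :: L, σ, h => by
    obtain ⟨h1, h2⟩ := h
    obtain ⟨σ', hσ'⟩ := insert_erasable_invLam h1
    rw [hσ'] at h2
    obtain ⟨σ'', hσ''⟩ := peel_invLam L σ' h2
    refine ⟨σ'', ?_⟩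
    rw [List.toFinset_cons, Finset.union_insert, ← Finset.insert_union, hσ', hσ'']

end Final


/-- the initial sections of the staircase valued digraph `𝒜` are
exactly the inversion sets of permutations of `S_n`. -/
theorem initialSections_staircase_eq_invSets (n : ℕ) (A : Finset (Lam n)) :
    IsInitialSection lamE lamTheta A ↔ ∃ σ : Equiv.Perm (Fin n), A = invLam σ := by
  constructor
  · rintro ⟨L, hL, rfl⟩
    have h0 : (∅ : Finset (Lam n)) = invLam (1 : Equiv.Perm (Fin n)) := by
      ext q
      simp only [Finset.notMem_empty, false_iff, mem_invLam, inv_one,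
        Equiv.Perm.one_apply]
      exact asymm q.2
    rw [h0] at hL
    obtain ⟨σ, hσ⟩ := peel_invLam L 1 hL
    refine ⟨σ, ?_⟩
    rw [← hσ, ← h0, Finset.empty_union]
  · rintro ⟨σ, rfl⟩
    exact invLam_isInitialSection σ
end

section
/- Let σ ∈ S_n with inversion set A = Inv(σ) viewed as an initial section of the staircase valued digraph 𝒜. For (a,b) ∉ A, the vertex (a,b) is erasable in the peeled valued digraph 𝒜_A if and only if a and b are adjacent in σ (i.e., σ⁻¹(b) = σ⁻¹(a)+1). -/
open scoped Classical

variable {V : Type*}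

private def mkLam {n : ℕ} (a b : Fin n) (h : a < b) : Lam n := Subtype.mk (a, b) h

@[simp] private lemma mkLam_fst {n : ℕ} (a b : Fin n) (h : a < b) :
    (mkLam a b h).1.1 = a := rfl

@[simp] private lemma mkLam_snd {n : ℕ} (a b : Fin n) (h : a < b) :
    (mkLam a b h).1.2 = b := rfl

private lemma bad_card {n : ℕ} (σ : Equiv.Perm (Fin n)) (x : Lam n)
    (hx : σ⁻¹ x.1.1 < σ⁻¹ x.1.2) :
    ((invLam σ).filter fun y => lamE x y).card =
      ((Finset.Ioo x.1.1 x.1.2).filter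
        fun k => σ⁻¹ k < σ⁻¹ x.1.1 ∨ σ⁻¹ x.1.2 < σ⁻¹ k).card := by
  apply Finset.card_bij (fun y _ => if y.1.1 = x.1.1 then y.1.2 else y.1.1)
  · intro y hy
    rw [Finset.mem_filter] at hy
    simp only [Finset.mem_filter, invLam, Finset.mem_univ, true_and, lamE] at hy
    obtain ⟨hyA, _, hcase⟩ := hy
    rcases hcase with ⟨h1, h2⟩ | ⟨h1, h2⟩
    · rw [if_pos h1, Finset.mem_filter, Finset.mem_Ioo]
      refine ⟨⟨h1 ▸ y.2, h2⟩, Or.inl ?_⟩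
      rw [← h1]; exact hyA
    · have hne : y.1.1 ≠ x.1.1 := ne_of_gt h2
      rw [if_neg hne, Finset.mem_filter, Finset.mem_Ioo]
      exact ⟨⟨h2, h1 ▸ y.2⟩, Or.inr (h1 ▸ hyA)⟩
  · intro y1 hy1 y2 hy2 heq
    rw [Finset.mem_filter] at hy1 hy2
    simp only [Finset.mem_filter, invLam, Finset.mem_univ, true_and, lamE] at hy1 hy2
    obtain ⟨hA1, _, hc1⟩ := hy1
    obtain ⟨hA2, _, hc2⟩ := hy2
    rcases hc1 with ⟨h11, h12⟩ | ⟨h11, h12⟩ <;>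
      rcases hc2 with ⟨h21, h22⟩ | ⟨h21, h22⟩
    · rw [if_pos h11, if_pos h21] at heq
      exact Subtype.ext (Prod.ext (h11.trans h21.symm) heq)
    · rw [if_pos h11, if_neg (ne_of_gt h22)] at heq
      exfalso
      have ha1 : σ⁻¹ y1.1.2 < σ⁻¹ x.1.1 := by rw [← h11]; exact hA1
      have ha2 : σ⁻¹ x.1.2 < σ⁻¹ y2.1.1 := by rw [← h21]; exact hA2
      rw [heq] at ha1
      exact absurd (ha1.trans (hx.trans ha2)) (lt_irrefl _)
    · rw [if_neg (ne_of_gt h12), if_pos h21] at heq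
      exfalso
      have ha1 : σ⁻¹ x.1.2 < σ⁻¹ y1.1.1 := by rw [← h11]; exact hA1
      have ha2 : σ⁻¹ y2.1.2 < σ⁻¹ x.1.1 := by rw [← h21]; exact hA2
      rw [← heq] at ha2
      exact absurd (ha2.trans (hx.trans ha1)) (lt_irrefl _)
    · rw [if_neg (ne_of_gt h12), if_neg (ne_of_gt h22)] at heq
      exact Subtype.ext (Prod.ext heq (h11.trans h21.symm))
  · intro k hk
    simp only [Finset.mem_filter, Finset.mem_Ioo] at hk
    obtain ⟨⟨hak, hkb⟩, hor⟩ := hk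
    rcases hor with h | h
    · refine ⟨mkLam x.1.1 k hak, ?_, ?_⟩
      · rw [Finset.mem_filter]
        simp only [Finset.mem_filter, invLam, Finset.mem_univ, true_and, lamE,
          mkLam_fst, mkLam_snd]
        refine ⟨h, ?_, Or.inl hkb⟩
        intro he
        have : x.1.2 = k := congrArg (fun z : Lam n => z.1.2) he
        exact absurd (this ▸ hkb) (lt_irrefl _)
      · rw [mkLam_fst, mkLam_snd, if_pos rfl]
    · refine ⟨mkLam k x.1.2 hkb, ?_, ?_⟩
      · rw [Finset.mem_filter]
        simp only [Finset.mem_filter, invLam, Finset.mem_univ, true_and, lamE,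
          mkLam_fst, mkLam_snd]
        refine ⟨h, ?_, Or.inr hak⟩
        intro he
        have : x.1.1 = k := congrArg (fun z : Lam n => z.1.1) he
        exact absurd (this ▸ hak) (lt_irrefl _)
      · rw [mkLam_fst, mkLam_snd, if_neg (ne_of_gt hak)]

private lemma curVal_formula {n : ℕ} (σ : Equiv.Perm (Fin n)) (x : Lam n)
    (hx : σ⁻¹ x.1.1 < σ⁻¹ x.1.2) :
    curVal lamE lamTheta (invLam σ) x =
      ((Finset.Ioo x.1.1 x.1.2).filter
        fun k => σ⁻¹ x.1.1 < σ⁻¹ k ∧ σ⁻¹ k < σ⁻¹ x.1.2).card := by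
  have hsplit := Finset.card_filter_add_card_filter_not
    (s := Finset.Ioo x.1.1 x.1.2)
    (p := fun k => σ⁻¹ x.1.1 < σ⁻¹ k ∧ σ⁻¹ k < σ⁻¹ x.1.2)
  have hcompl : ((Finset.Ioo x.1.1 x.1.2).filter
      fun k => ¬(σ⁻¹ x.1.1 < σ⁻¹ k ∧ σ⁻¹ k < σ⁻¹ x.1.2)) =
      ((Finset.Ioo x.1.1 x.1.2).filter
      fun k => σ⁻¹ k < σ⁻¹ x.1.1 ∨ σ⁻¹ x.1.2 < σ⁻¹ k) := by
    apply Finset.filter_congr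
    intro k hk
    rw [Finset.mem_Ioo] at hk
    constructor
    · intro hcon
      rcases lt_trichotomy (σ⁻¹ k) (σ⁻¹ x.1.1) with h1 | h1 | h1
      · exact Or.inl h1
      · exact absurd (σ⁻¹.injective h1) (ne_of_gt hk.1)
      · rcases lt_trichotomy (σ⁻¹ k) (σ⁻¹ x.1.2) with h2 | h2 | h2
        · exact absurd ⟨h1, h2⟩ hcon
        · exact absurd (σ⁻¹.injective h2) (ne_of_lt hk.2)
        · exact Or.inr h2
    · rintro (h | h) ⟨h1, h2⟩
      · exact absurd (h.trans h1) (lt_irrefl _)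
      · exact absurd (h2.trans h) (lt_irrefl _)
  have hθ : lamTheta x = (Finset.Ioo x.1.1 x.1.2).card := by
    rw [Fin.card_Ioo]; rfl
  unfold curVal
  rw [bad_card σ x hx, hθ]
  rw [hcompl] at hsplit
  omega

/-- for `A = Inv(σ)` viewed as an initial section of the staircase
valued digraph `𝒜`, a box `(a,b) ∉ A` is erasable in the peeled valued digraph
`𝒜_A` iff `a` and `b` are adjacent in `σ`, i.e. `σ⁻¹ b = σ⁻¹ a + 1`. -/
theorem erasable_iff_adjacent (n : ℕ) (σ : Equiv.Perm (Fin n)) (v : Lam n)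
    (hv : v ∉ invLam σ) :
    ErasableAt lamE lamTheta (invLam σ) v ↔
      ((σ⁻¹ v.1.2 : Fin n) : ℕ) = ((σ⁻¹ v.1.1 : Fin n) : ℕ) + 1 := by
  have hv' : ¬ σ⁻¹ v.1.2 < σ⁻¹ v.1.1 := by simpa [invLam] using hv
  have hvb : σ⁻¹ v.1.1 < σ⁻¹ v.1.2 := by
    refine lt_of_le_of_ne (not_lt.mp hv') fun he => ?_
    exact absurd (σ⁻¹.injective he) (ne_of_lt v.2)
  have hvbn : ((σ⁻¹ v.1.1 : Fin n) : ℕ) < ((σ⁻¹ v.1.2 : Fin n) : ℕ) := hvb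
  constructor
  · rintro ⟨-, h0, hin⟩
    rw [curVal_formula σ v hvb, Finset.card_eq_zero, Finset.filter_eq_empty_iff] at h0
    have hgood : ∀ k, v.1.1 < k → k < v.1.2 →
        ¬(σ⁻¹ v.1.1 < σ⁻¹ k ∧ σ⁻¹ k < σ⁻¹ v.1.2) := fun k h1 h2 =>
      h0 (Finset.mem_Ioo.mpr ⟨h1, h2⟩)
    by_contra hne
    have h2n : ((σ⁻¹ v.1.1 : Fin n) : ℕ) + 1 < ((σ⁻¹ v.1.2 : Fin n) : ℕ) := by omega
    set p : Fin n := ⟨((σ⁻¹ v.1.1 : Fin n) : ℕ) + 1,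
      lt_trans h2n (σ⁻¹ v.1.2).isLt⟩ with hp
    set k0 := σ p with hk0def
    have hk0 : σ⁻¹ k0 = p := σ.symm_apply_apply p
    have hk0a : σ⁻¹ v.1.1 < σ⁻¹ k0 := by
      rw [hk0, Fin.lt_def, hp]; simp
    have hk0b : σ⁻¹ k0 < σ⁻¹ v.1.2 := by
      rw [hk0, Fin.lt_def, hp]; exact h2n
    have hk0ne1 : k0 ≠ v.1.1 := fun he => by
      rw [he] at hk0a; exact lt_irrefl _ hk0a
    have hk0ne2 : k0 ≠ v.1.2 := fun he => by
      rw [he] at hk0b; exact lt_irrefl _ hk0b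
    have hk0out : k0 < v.1.1 ∨ v.1.2 < k0 := by
      rcases lt_trichotomy k0 v.1.1 with h | h | h
      · exact Or.inl h
      · exact absurd h hk0ne1
      · right
        rcases lt_trichotomy k0 v.1.2 with h' | h' | h'
        · exact absurd ⟨hk0a, hk0b⟩ (hgood k0 h h')
        · exact absurd h' hk0ne2
        · exact h'
    rcases hk0out with hbig | hbig
    · -- k0 < v.1.1 : take the max of σ⁻¹ over such k
      set T := Finset.univ.filter
        (fun k : Fin n => k < v.1.1 ∧ σ⁻¹ v.1.1 < σ⁻¹ k ∧ σ⁻¹ k < σ⁻¹ v.1.2) with hT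
      have hTne : T.Nonempty := ⟨k0, by
        simp only [hT, Finset.mem_filter, Finset.mem_univ, true_and]
        exact ⟨hbig, hk0a, hk0b⟩⟩
      obtain ⟨c, hcT, hcmax⟩ := Finset.exists_max_image T (fun k => σ⁻¹ k) hTne
      simp only [hT, Finset.mem_filter, Finset.mem_univ, true_and] at hcT
      obtain ⟨hc1, hc2, hc3⟩ := hcT
      obtain ⟨z, hz1, hz2⟩ : ∃ z : Lam n, z.1.1 = c ∧ z.1.2 = v.1.2 :=
        ⟨mkLam c v.1.2 (lt_trans hc1 v.2), rfl, rfl⟩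
      have hzlt : σ⁻¹ z.1.1 < σ⁻¹ z.1.2 := by
        rw [hz1, hz2]; exact hc3
      have hzA : z ∉ invLam σ := by
        simp only [invLam, Finset.mem_filter, Finset.mem_univ, true_and]
        exact not_lt.mpr (le_of_lt hzlt)
      have hzE : lamE z v := by
        refine ⟨fun he => ?_, Or.inr ⟨hz2.symm, by rw [hz1]; exact hc1⟩⟩
        have : z.1.1 = v.1.1 := congrArg (fun w : Lam n => w.1.1) he
        rw [hz1] at this
        exact absurd (this ▸ hc1) (lt_irrefl _)
      refine hin z hzA hzE ?_
      rw [curVal_formula σ z hzlt, Finset.card_eq_zero, Finset.filter_eq_empty_iff]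
      intro m hm
      rw [Finset.mem_Ioo] at hm
      rintro ⟨hm1, hm2⟩
      rw [hz1, hz2] at hm
      rw [hz1] at hm1
      rw [hz2] at hm2
      have hma : σ⁻¹ v.1.1 < σ⁻¹ m := hc2.trans hm1
      rcases lt_trichotomy m v.1.1 with h | h | h
      · have hmT : m ∈ T := by
          simp only [hT, Finset.mem_filter, Finset.mem_univ, true_and]
          exact ⟨h, hma, hm2⟩
        exact absurd hm1 (not_lt.mpr (hcmax m hmT))
      · rw [h] at hma; exact lt_irrefl _ hma
      · exact hgood m h hm.2 ⟨hma, hm2⟩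
    · -- v.1.2 < k0 : take the min of σ⁻¹ over such k
      set T := Finset.univ.filter
        (fun k : Fin n => v.1.2 < k ∧ σ⁻¹ v.1.1 < σ⁻¹ k ∧ σ⁻¹ k < σ⁻¹ v.1.2) with hT
      have hTne : T.Nonempty := ⟨k0, by
        simp only [hT, Finset.mem_filter, Finset.mem_univ, true_and]
        exact ⟨hbig, hk0a, hk0b⟩⟩
      obtain ⟨c, hcT, hcmin⟩ := Finset.exists_min_image T (fun k => σ⁻¹ k) hTne
      simp only [hT, Finset.mem_filter, Finset.mem_univ, true_and] at hcT
      obtain ⟨hc1, hc2, hc3⟩ := hcT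
      obtain ⟨z, hz1, hz2⟩ : ∃ z : Lam n, z.1.1 = v.1.1 ∧ z.1.2 = c :=
        ⟨mkLam v.1.1 c (lt_trans v.2 hc1), rfl, rfl⟩
      have hzlt : σ⁻¹ z.1.1 < σ⁻¹ z.1.2 := by
        rw [hz1, hz2]; exact hc2
      have hzA : z ∉ invLam σ := by
        simp only [invLam, Finset.mem_filter, Finset.mem_univ, true_and]
        exact not_lt.mpr (le_of_lt hzlt)
      have hzE : lamE z v := by
        refine ⟨fun he => ?_, Or.inl ⟨hz1.symm, by rw [hz2]; exact hc1⟩⟩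
        have : z.1.2 = v.1.2 := congrArg (fun w : Lam n => w.1.2) he
        rw [hz2] at this
        exact absurd (this ▸ hc1) (lt_irrefl _)
      refine hin z hzA hzE ?_
      rw [curVal_formula σ z hzlt, Finset.card_eq_zero, Finset.filter_eq_empty_iff]
      intro m hm
      rw [Finset.mem_Ioo] at hm
      rintro ⟨hm1, hm2⟩
      rw [hz1, hz2] at hm
      rw [hz1] at hm1
      rw [hz2] at hm2
      have hmb : σ⁻¹ m < σ⁻¹ v.1.2 := hm2.trans hc3
      rcases lt_trichotomy m v.1.2 with h | h | h
      · exact hgood m hm.1 h ⟨hm1, hmb⟩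
      · rw [h] at hmb; exact lt_irrefl _ hmb
      · have hmT : m ∈ T := by
          simp only [hT, Finset.mem_filter, Finset.mem_univ, true_and]
          exact ⟨h, hm1, hmb⟩
        exact absurd hm2 (not_lt.mpr (hcmin m hmT))
  · intro h
    refine ⟨hv, ?_, ?_⟩
    · rw [curVal_formula σ v hvb, Finset.card_eq_zero, Finset.filter_eq_empty_iff]
      intro k _
      rintro ⟨h1, h2⟩
      rw [Fin.lt_def] at h1 h2
      omega
    · intro z hzA hzE
      obtain ⟨hne, hcase⟩ := hzE
      have hz' : ¬ σ⁻¹ z.1.2 < σ⁻¹ z.1.1 := by simpa [invLam] using hzA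
      have hzlt : σ⁻¹ z.1.1 < σ⁻¹ z.1.2 := by
        refine lt_of_le_of_ne (not_lt.mp hz') fun he => ?_
        exact absurd (σ⁻¹.injective he) (ne_of_lt z.2)
      rw [curVal_formula σ z hzlt]
      rcases hcase with ⟨h1, h2⟩ | ⟨h1, h2⟩
      · -- z = (v.1.1, c) with v.1.2 < c
        refine Finset.card_ne_zero_of_mem (a := v.1.2) ?_
        rw [Finset.mem_filter, Finset.mem_Ioo]
        have hz1 : σ⁻¹ z.1.1 = σ⁻¹ v.1.1 := by rw [h1]
        have hne2 : σ⁻¹ z.1.2 ≠ σ⁻¹ v.1.2 := fun he =>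
          absurd (σ⁻¹.injective he) (ne_of_gt h2)
        have hne2' : ((σ⁻¹ z.1.2 : Fin n) : ℕ) ≠ ((σ⁻¹ v.1.2 : Fin n) : ℕ) :=
          fun he => hne2 (Fin.val_injective he)
        have hzltn : ((σ⁻¹ z.1.1 : Fin n) : ℕ) < ((σ⁻¹ z.1.2 : Fin n) : ℕ) := hzlt
        have hz1n : ((σ⁻¹ z.1.1 : Fin n) : ℕ) = ((σ⁻¹ v.1.1 : Fin n) : ℕ) := by
          rw [hz1]
        refine ⟨⟨h1 ▸ v.2, h2⟩, ?_, ?_⟩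
        · rw [hz1]; exact hvb
        · rw [Fin.lt_def]; omega
      · -- z = (c, v.1.2) with c < v.1.1
        refine Finset.card_ne_zero_of_mem (a := v.1.1) ?_
        rw [Finset.mem_filter, Finset.mem_Ioo]
        have hz2 : σ⁻¹ z.1.2 = σ⁻¹ v.1.2 := by rw [h1]
        have hne2 : σ⁻¹ z.1.1 ≠ σ⁻¹ v.1.1 := fun he =>
          absurd (σ⁻¹.injective he) (ne_of_lt h2)
        have hne2' : ((σ⁻¹ z.1.1 : Fin n) : ℕ) ≠ ((σ⁻¹ v.1.1 : Fin n) : ℕ) :=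
          fun he => hne2 (Fin.val_injective he)
        have hzltn : ((σ⁻¹ z.1.1 : Fin n) : ℕ) < ((σ⁻¹ z.1.2 : Fin n) : ℕ) := hzlt
        have hz2n : ((σ⁻¹ z.1.2 : Fin n) : ℕ) = ((σ⁻¹ v.1.2 : Fin n) : ℕ) := by
          rw [hz2]
        refine ⟨⟨h2, h1 ▸ v.2⟩, ?_, ?_⟩
        · rw [Fin.lt_def]; omega
        · rw [hz2]; exact hvb
end

section
/- Let σ ∈ Ã_n (affine permutation) and j ∈ [n]. There is a pair (a,b) with 1 ≤ a ≤ n, a < b, such that σ s_j swaps positions of a+kn and b+kn for all k ∈ ℤ, and: if σ⁻¹(a) = σ⁻¹(b) - 1 then ℓ(σ s_j) = ℓ(σ)+1 and Inv_Ã(σ s_j) = Inv_Ã(σ) ∪ {(a,b)}; otherwise ℓ(σ s_j) = ℓ(σ)-1 and Inv_Ã(σ s_j) = Inv_Ã(σ) ∖ {(a,b)}. -/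
/-- `σ` is an affine permutation in `Ã_n`: a bijection of `ℤ` with
`σ(q + n) = σ(q) + n` and `σ(1) + ⋯ + σ(n) = n(n+1)/2`. -/
def IsAffine (n : ℕ) (σ : Equiv.Perm ℤ) : Prop :=
  (∀ q : ℤ, σ (q + n) = σ q + n) ∧
    ∑ i ∈ Finset.Icc (1 : ℤ) (n : ℤ), σ i = (n : ℤ) * ((n : ℤ) + 1) / 2

/-- The Coxeter generators `s_1, …, s_n` of `Ã_n`: `s_i` swaps `i + kn` and
`i + 1 + kn` for all `k ∈ ℤ`. -/
def AffGen (n : ℕ) (s : Equiv.Perm ℤ) : Prop :=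
  ∃ i : ℕ, 1 ≤ i ∧ i ≤ n ∧ ∀ x : ℤ,
    s x = if x % (n : ℤ) = (i : ℤ) % (n : ℤ) then x + 1
      else if x % (n : ℤ) = ((i : ℤ) + 1) % (n : ℤ) then x - 1 else x

/-- The `Ã`-inversion set:
`Inv_Ã(σ) = {(a,b) ∈ [n] × ℕ* : a < b, σ⁻¹ a > σ⁻¹ b}`. -/
def InvASet (n : ℕ) (σ : Equiv.Perm ℤ) : Set (ℤ × ℤ) :=
  {p | 1 ≤ p.1 ∧ p.1 ≤ (n : ℤ) ∧ p.1 < p.2 ∧ σ⁻¹ p.2 < σ⁻¹ p.1}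

/-- Coxeter length on `Ã_n`, i.e. the number of `Ã`-inversions. -/
noncomputable def aLen (n : ℕ) (σ : Equiv.Perm ℤ) : ℕ := Set.ncard (InvASet n σ)

/-- The right weak order on `Ã_n`. -/
def AWeakLE (n : ℕ) (σ ω : Equiv.Perm ℤ) : Prop :=
  ∃ l : List (Equiv.Perm ℤ), (∀ s ∈ l, AffGen n s) ∧ ω = σ * l.prod ∧
    aLen n ω = aLen n σ + l.length

lemma perm_apply_inv_self' {α : Type*} (σ : Equiv.Perm α) (x : α) : σ (σ⁻¹ x) = x :=
  (Equiv.eq_symm_apply σ).mp rfl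

lemma perm_inv_apply_self' {α : Type*} (σ : Equiv.Perm α) (x : α) : σ⁻¹ (σ x) = x :=
  Equiv.Perm.inv_eq_iff_eq.mpr rfl

private lemma sigma_shift (n : ℕ) (σ : Equiv.Perm ℤ)
    (hper : ∀ q : ℤ, σ (q + n) = σ q + n) :
    ∀ (k x : ℤ), σ (x + k * n) = σ x + k * n := by
  intro k
  induction k using Int.induction_on with
  | zero => simp
  | succ m ih =>
      intro x
      have h1 : x + ((m : ℤ) + 1) * n = (x + m * n) + n := by ring
      rw [h1, hper, ih]; ring
  | pred m ih =>
      intro x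
      have h1 : (x + (-(m : ℤ) - 1) * n) + n = x + (-(m : ℤ)) * n := by ring
      have h2 := hper (x + (-(m : ℤ) - 1) * n)
      rw [h1, ih] at h2
      linarith

private lemma sigma_inv_shift (n : ℕ) (σ : Equiv.Perm ℤ)
    (hper : ∀ q : ℤ, σ (q + n) = σ q + n) :
    ∀ (k x : ℤ), σ⁻¹ (x + k * n) = σ⁻¹ x + k * n := by
  intro k x
  apply σ.injective
  rw [perm_apply_inv_self', sigma_shift n σ hper, perm_apply_inv_self']

private lemma inv_finite (n : ℕ) (hn : 2 ≤ n) (σ : Equiv.Perm ℤ)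
    (hshift : ∀ k x : ℤ, σ⁻¹ (x + k * n) = σ⁻¹ x + k * n) :
    (InvASet n σ).Finite := by
  have hn2 : (2 : ℤ) ≤ (n : ℤ) := by exact_mod_cast hn
  have hne : (Finset.Icc (1 : ℤ) (n : ℤ)).Nonempty :=
    ⟨1, by simp; linarith⟩
  set T := (Finset.Icc (1 : ℤ) (n : ℤ)).image (fun r => σ⁻¹ r) with hT
  have hTne : T.Nonempty := hne.image _
  set M := T.max' hTne with hM
  set m := T.min' hTne with hm
  apply Set.Finite.subset
    ((Set.finite_Icc (1 : ℤ) (n : ℤ)).prod (Set.finite_Icc (1 : ℤ) ((n : ℤ) + M - m - 1)))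
  rintro ⟨x, y⟩ ⟨hx1, hxn, hxy, hinv⟩
  refine ⟨⟨hx1, hxn⟩, ⟨by linarith, ?_⟩⟩
  set r := (y - 1) % n + 1 with hr
  set k := (y - 1) / n with hk
  have hmod := Int.emod_add_mul_ediv (y - 1) (n : ℤ)
  have hcomm : (n : ℤ) * k = k * n := mul_comm _ _
  have hy : y = r + k * n := by rw [hr]; linarith
  have hr0 := Int.emod_nonneg (y - 1) (by linarith : (n : ℤ) ≠ 0)
  have hrlt := Int.emod_lt_of_pos (y - 1) (by linarith : (0 : ℤ) < n)
  have hr1 : 1 ≤ r := by omega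
  have hrn : r ≤ (n : ℤ) := by omega
  have hk0 : 0 ≤ k := Int.ediv_nonneg (by linarith) (by linarith)
  have hxM : σ⁻¹ x ≤ M :=
    Finset.le_max' T _ (Finset.mem_image_of_mem _ (Finset.mem_Icc.mpr ⟨hx1, hxn⟩))
  have hrm : m ≤ σ⁻¹ r :=
    Finset.min'_le T _ (Finset.mem_image_of_mem _ (Finset.mem_Icc.mpr ⟨hr1, hrn⟩))
  have hyr : σ⁻¹ y = σ⁻¹ r + k * n := by rw [hy, hshift]
  have hkn : k * n < M - m := by linarith
  have hkn' : k * n + 1 ≤ M - m := Int.lt_iff_add_one_le.mp hkn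
  linarith

/-- for `σ ∈ Ã_n` and a generator `s_j`, there is a pair `(a,b)`
with `1 ≤ a ≤ n`, `a < b`, such that `σ s_j` is obtained from `σ` by swapping
the positions of `a + kn` and `b + kn` for all `k ∈ ℤ`, and: if
`σ⁻¹ a = σ⁻¹ b - 1` then `ℓ(σ s_j) = ℓ(σ) + 1` and
`Inv_Ã(σ s_j) = Inv_Ã(σ) ∪ {(a,b)}`; otherwise `ℓ(σ s_j) = ℓ(σ) - 1` and
`Inv_Ã(σ s_j) = Inv_Ã(σ) \ {(a,b)}`. -/
theorem affineCover_adjacent (n : ℕ) (hn : 2 ≤ n) (σ s : Equiv.Perm ℤ)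
    (hσ : IsAffine n σ) (hs : AffGen n s) :
    ∃ a b : ℤ, 1 ≤ a ∧ a ≤ (n : ℤ) ∧ a < b ∧
      (∀ k : ℤ, (σ * s)⁻¹ (a + k * n) = σ⁻¹ (b + k * n) ∧
        (σ * s)⁻¹ (b + k * n) = σ⁻¹ (a + k * n)) ∧
      (∀ c : ℤ, (∀ k : ℤ, c ≠ a + k * n ∧ c ≠ b + k * n) → (σ * s)⁻¹ c = σ⁻¹ c) ∧
      (σ⁻¹ a = σ⁻¹ b - 1 →
        aLen n (σ * s) = aLen n σ + 1 ∧ InvASet n (σ * s) = InvASet n σ ∪ {(a, b)}) ∧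
      (σ⁻¹ a ≠ σ⁻¹ b - 1 →
        aLen n (σ * s) + 1 = aLen n σ ∧ InvASet n (σ * s) = InvASet n σ \ {(a, b)}) := by
  obtain ⟨hper, -⟩ := hσ
  obtain ⟨i, hi1, hin, hsx⟩ := hs
  have hn2 : (2 : ℤ) ≤ (n : ℤ) := by exact_mod_cast hn
  have hi1' : (1 : ℤ) ≤ (i : ℤ) := by exact_mod_cast hi1
  have hin' : (i : ℤ) ≤ (n : ℤ) := by exact_mod_cast hin
  have hshiftσ := sigma_shift n σ hper
  have hshift := sigma_inv_shift n σ hper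
  have hfin := inv_finite n hn σ hshift
  -- mod facts
  have hne : ((i : ℤ)) % n ≠ ((i : ℤ) + 1) % n := by
    intro h
    have hd : (n : ℤ) ∣ ((i : ℤ) + 1) - (i : ℤ) := Int.ModEq.dvd h
    have he : ((i : ℤ) + 1) - (i : ℤ) = 1 := by ring
    rw [he] at hd
    have := Int.le_of_dvd one_pos hd
    linarith
  -- s basics
  have hsA : ∀ x : ℤ, x % n = (i : ℤ) % n → s x = x + 1 := by
    intro x h; rw [hsx x, if_pos h]
  have hsB : ∀ x : ℤ, x % n = ((i : ℤ) + 1) % n → s x = x - 1 := by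
    intro x h
    have h'' : ¬ (x % (n : ℤ) = (i : ℤ) % n) := fun h' => hne (h'.symm.trans h)
    rw [hsx x, if_neg h'', if_pos h]
  have hsC : ∀ x : ℤ, x % n ≠ (i : ℤ) % n → x % n ≠ ((i : ℤ) + 1) % n → s x = x := by
    intro x h1 h2; rw [hsx x, if_neg h1, if_neg h2]
  have hbnd : ∀ x : ℤ, x - 1 ≤ s x ∧ s x ≤ x + 1 := by
    intro x; rw [hsx x]; split_ifs <;> omega
  have hss : ∀ x : ℤ, s (s x) = x := by
    intro x
    by_cases h1 : x % (n : ℤ) = (i : ℤ) % n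
    · rw [hsA x h1, hsB (x + 1) (Int.ModEq.add_right 1 h1)]; ring
    · by_cases h2 : x % (n : ℤ) = ((i : ℤ) + 1) % n
      · have h3 : (x - 1) % (n : ℤ) = (i : ℤ) % n := by
          have h4 : (x - 1) % (n : ℤ) = ((i : ℤ) + 1 - 1) % n := Int.ModEq.sub_right 1 h2
          have h5 : (i : ℤ) + 1 - 1 = (i : ℤ) := by ring
          rwa [h5] at h4
        rw [hsB x h2, hsA (x - 1) h3]; ring
      · rw [hsC x h1 h2, hsC x h1 h2]
  have hsinv : ∀ x : ℤ, s⁻¹ x = s x := by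
    intro x
    conv_lhs => rw [← hss x]
    rw [perm_inv_apply_self']
  have hmulinv : ∀ c : ℤ, (σ * s)⁻¹ c = s (σ⁻¹ c) := by
    intro c; rw [mul_inv_rev, Equiv.Perm.mul_apply, hsinv]
  -- u, v
  set u := σ (i : ℤ) with hu
  set v := σ ((i : ℤ) + 1) with hv
  have hiu : σ⁻¹ u = (i : ℤ) := perm_inv_apply_self' σ _
  have hiv : σ⁻¹ v = (i : ℤ) + 1 := perm_inv_apply_self' σ _
  have huvne : u ≠ v := by
    intro h; rw [h, hiv] at hiu; omega
  -- a, b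
  set w := min u v with hwdef
  set W := max u v with hWdef
  have hwW : w < W := min_lt_max.mpr huvne
  set q := (w - 1) / n with hq
  set a := (w - 1) % n + 1 with ha
  have hr0 := Int.emod_nonneg (w - 1) (by linarith : (n : ℤ) ≠ 0)
  have hrlt := Int.emod_lt_of_pos (w - 1) (by linarith : (0 : ℤ) < n)
  have ha1 : 1 ≤ a := by omega
  have han : a ≤ (n : ℤ) := by omega
  have hmodw := Int.emod_add_mul_ediv (w - 1) (n : ℤ)
  have hcomm : (n : ℤ) * q = q * n := mul_comm _ _
  have hw : w = a + q * n := by rw [ha]; linarith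
  set b := a + (W - w) with hb
  have hab : a < b := by rw [hb]; linarith
  have hW : W = b + q * n := by rw [hb]; linarith
  have hia : σ⁻¹ a = σ⁻¹ w - q * n := by
    have h := hshift q a; rw [← hw] at h; linarith
  have hib : σ⁻¹ b = σ⁻¹ W - q * n := by
    have h := hshift q b; rw [← hW] at h; linarith
  have hcase : (u < v ∧ w = u ∧ W = v) ∨ (v < u ∧ w = v ∧ W = u) := by
    rcases lt_or_gt_of_ne huvne with h | h
    · exact Or.inl ⟨h, min_eq_left h.le, max_eq_right h.le⟩
    · exact Or.inr ⟨h, min_eq_right h.le, max_eq_left h.le⟩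
  have hsw : ∀ t : ℤ, s (σ⁻¹ w + t * n) = σ⁻¹ W + t * n := by
    intro t
    rcases hcase with ⟨h, hw', hW'⟩ | ⟨h, hw', hW'⟩
    · rw [hw', hW', hiu, hiv]
      rw [hsA _ (Int.add_mul_emod_self_right _ _ _)]; ring
    · rw [hw', hW', hiv, hiu]
      rw [hsB _ (Int.add_mul_emod_self_right _ _ _)]; ring
  have hsW : ∀ t : ℤ, s (σ⁻¹ W + t * n) = σ⁻¹ w + t * n := by
    intro t
    rcases hcase with ⟨h, hw', hW'⟩ | ⟨h, hw', hW'⟩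
    · rw [hw', hW', hiu, hiv]
      rw [hsB _ (Int.add_mul_emod_self_right _ _ _)]; ring
    · rw [hw', hW', hiv, hiu]
      rw [hsA _ (Int.add_mul_emod_self_right _ _ _)]; ring
  -- swap claim
  have hswap : ∀ k : ℤ, (σ * s)⁻¹ (a + k * n) = σ⁻¹ (b + k * n) ∧
      (σ * s)⁻¹ (b + k * n) = σ⁻¹ (a + k * n) := by
    intro k
    constructor
    · rw [hmulinv, hshift k a, hshift k b, hia, hib]
      have e1 : σ⁻¹ w - q * n + k * n = σ⁻¹ w + (k - q) * n := by ring
      have e2 : σ⁻¹ W - q * n + k * n = σ⁻¹ W + (k - q) * n := by ring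
      rw [e1, e2, hsw]
    · rw [hmulinv, hshift k a, hshift k b, hia, hib]
      have e1 : σ⁻¹ w - q * n + k * n = σ⁻¹ w + (k - q) * n := by ring
      have e2 : σ⁻¹ W - q * n + k * n = σ⁻¹ W + (k - q) * n := by ring
      rw [e1, e2, hsW]
  have hsa : s (σ⁻¹ a) = σ⁻¹ b := by
    have h := (hswap 0).1
    rw [hmulinv] at h
    simpa using h
  have hsb : s (σ⁻¹ b) = σ⁻¹ a := by
    have h := (hswap 0).2
    rw [hmulinv] at h
    simpa using h
  -- fix claim
  have hfix : ∀ c : ℤ, (∀ k : ℤ, c ≠ a + k * n ∧ c ≠ b + k * n) → (σ * s)⁻¹ c = σ⁻¹ c := by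
    intro c hc
    rw [hmulinv]
    have h1 : (σ⁻¹ c) % (n : ℤ) ≠ (i : ℤ) % n := by
      intro h
      obtain ⟨k, hk⟩ := Int.ModEq.dvd h
      have hcom : (n : ℤ) * k = k * n := mul_comm _ _
      have hsc : σ⁻¹ c = (i : ℤ) + (-k) * n := by linarith
      have hcu : c = u + (-k) * n := by
        have h2 := hshiftσ (-k) (i : ℤ)
        rw [← hsc, perm_apply_inv_self'] at h2
        exact h2
      rcases hcase with ⟨h', hw', hW'⟩ | ⟨h', hw', hW'⟩
      · exact (hc (q + (-k))).1 (by rw [hcu, ← hw', hw]; ring)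
      · exact (hc (q + (-k))).2 (by rw [hcu, ← hW', hW]; ring)
    have h2 : (σ⁻¹ c) % (n : ℤ) ≠ ((i : ℤ) + 1) % n := by
      intro h
      obtain ⟨k, hk⟩ := Int.ModEq.dvd h
      have hcom : (n : ℤ) * k = k * n := mul_comm _ _
      have hsc : σ⁻¹ c = ((i : ℤ) + 1) + (-k) * n := by linarith
      have hcv : c = v + (-k) * n := by
        have h2 := hshiftσ (-k) ((i : ℤ) + 1)
        rw [← hsc, perm_apply_inv_self'] at h2
        exact h2
      rcases hcase with ⟨h', hw', hW'⟩ | ⟨h', hw', hW'⟩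
      · exact (hc (q + (-k))).2 (by rw [hcv, ← hW', hW]; ring)
      · exact (hc (q + (-k))).1 (by rw [hcv, ← hw', hw]; ring)
    exact hsC _ h1 h2
  -- comparison lemmas
  have hkey1 : ∀ X Y : ℤ, X + 1 < Y → s X < s Y := by
    intro X Y h
    have h1 := hbnd X
    have h2 := hbnd Y
    have hne' : s X ≠ s Y := by
      intro h'
      have := s.injective h'
      omega
    omega
  have hkey : ∀ X Y : ℤ, X < Y → ¬(X % (n : ℤ) = (i : ℤ) % n ∧ Y = X + 1) → s X < s Y := by
    intro X Y hlt hbad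
    rcases eq_or_lt_of_le (by omega : X + 1 ≤ Y) with hY | hY
    · by_cases h1 : X % (n : ℤ) = (i : ℤ) % n
      · exact absurd ⟨h1, hY.symm⟩ hbad
      · by_cases h2 : X % (n : ℤ) = ((i : ℤ) + 1) % n
        · rw [hsB X h2]
          have := (hbnd Y).1
          omega
        · rw [hsC X h1 h2]
          by_cases h3 : Y % (n : ℤ) = (i : ℤ) % n
          · rw [hsA Y h3]; omega
          · by_cases h4 : Y % (n : ℤ) = ((i : ℤ) + 1) % n
            · exfalso
              apply h1
              have h5 : (Y - 1) % (n : ℤ) = ((i : ℤ) + 1 - 1) % n := Int.ModEq.sub_right 1 h4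
              have h6 : (i : ℤ) + 1 - 1 = (i : ℤ) := by ring
              have h7 : Y - 1 = X := by omega
              rwa [h6, h7] at h5
            · rw [hsC Y h3 h4]; omega
    · exact hkey1 X Y hY
  have hkeyiff : ∀ X Y : ℤ, X ≠ Y →
      ¬(X % (n : ℤ) = (i : ℤ) % n ∧ Y = X + 1) →
      ¬(Y % (n : ℤ) = (i : ℤ) % n ∧ X = Y + 1) →
      (s X < s Y ↔ X < Y) := by
    intro X Y hne' hb1 hb2
    constructor
    · intro h
      by_contra h'
      have hYX : Y < X := by omega
      have := hkey Y X hYX hb2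
      omega
    · intro h
      exact hkey X Y h hb1
  -- pair uniqueness
  have hpair : ∀ x y t : ℤ, 1 ≤ x → x ≤ (n : ℤ) → x = w + t * n → y = W + t * n →
      x = a ∧ y = b := by
    intro x y t hx1 hxn hxw hyW
    have hx : x = a + (q + t) * n := by rw [hxw, hw]; ring
    have hqt : q + t = 0 := by
      by_contra h
      rcases lt_or_gt_of_ne h with h' | h'
      · have h2 := mul_le_mul_of_nonneg_right (by omega : q + t ≤ -1) (by linarith : (0 : ℤ) ≤ n)
        have : (-1 : ℤ) * n = -n := by ring
        rw [this] at h2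
        linarith
      · have h2 := mul_le_mul_of_nonneg_right (by omega : (1 : ℤ) ≤ q + t) (by linarith : (0 : ℤ) ≤ n)
        have : (1 : ℤ) * n = n := by ring
        rw [this] at h2
        linarith
    have hy : y = b + (q + t) * n := by rw [hyW, hW]; ring
    rw [hqt] at hx hy
    exact ⟨by omega, by omega⟩
  -- not-bad conditions
  have hnotbad : ∀ x y : ℤ, 1 ≤ x → x ≤ (n : ℤ) → x < y → (x, y) ≠ (a, b) →
      ¬((σ⁻¹ x) % (n : ℤ) = (i : ℤ) % n ∧ σ⁻¹ y = σ⁻¹ x + 1) ∧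
      ¬((σ⁻¹ y) % (n : ℤ) = (i : ℤ) % n ∧ σ⁻¹ x = σ⁻¹ y + 1) := by
    intro x y hx1 hxn hxy hne'
    constructor
    · rintro ⟨hm, hs1⟩
      obtain ⟨k, hk⟩ := Int.ModEq.dvd hm
      have hcom : (n : ℤ) * k = k * n := mul_comm _ _
      have hsx' : σ⁻¹ x = (i : ℤ) + (-k) * n := by linarith
      have hx' : x = u + (-k) * n := by
        have h2 := hshiftσ (-k) (i : ℤ)
        rw [← hsx', perm_apply_inv_self'] at h2
        exact h2
      have hsy' : σ⁻¹ y = ((i : ℤ) + 1) + (-k) * n := by rw [hs1, hsx']; ring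
      have hy' : y = v + (-k) * n := by
        have h2 := hshiftσ (-k) ((i : ℤ) + 1)
        rw [← hsy', perm_apply_inv_self'] at h2
        exact h2
      have huv : u < v := by
        by_contra h
        have : v ≤ u := by omega
        rw [hx', hy'] at hxy
        omega
      rcases hcase with ⟨h', hw', hW'⟩ | ⟨h', hw', hW'⟩
      · obtain ⟨hxa, hyb⟩ := hpair x y (-k) hx1 hxn (by rw [hw']; exact hx')
          (by rw [hW']; exact hy')
        exact hne' (by rw [hxa, hyb])
      · omega
    · rintro ⟨hm, hs1⟩
      obtain ⟨k, hk⟩ := Int.ModEq.dvd hm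
      have hcom : (n : ℤ) * k = k * n := mul_comm _ _
      have hsy' : σ⁻¹ y = (i : ℤ) + (-k) * n := by linarith
      have hy' : y = u + (-k) * n := by
        have h2 := hshiftσ (-k) (i : ℤ)
        rw [← hsy', perm_apply_inv_self'] at h2
        exact h2
      have hsx' : σ⁻¹ x = ((i : ℤ) + 1) + (-k) * n := by rw [hs1, hsy']; ring
      have hx' : x = v + (-k) * n := by
        have h2 := hshiftσ (-k) ((i : ℤ) + 1)
        rw [← hsx', perm_apply_inv_self'] at h2
        exact h2
      have hvu : v < u := by
        by_contra h
        have : u ≤ v := by omega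
        rw [hx', hy'] at hxy
        omega
      rcases hcase with ⟨h', hw', hW'⟩ | ⟨h', hw', hW'⟩
      · omega
      · obtain ⟨hxa, hyb⟩ := hpair x y (-k) hx1 hxn (by rw [hw']; exact hx')
          (by rw [hW']; exact hy')
        exact hne' (by rw [hxa, hyb])
  have hmem : ∀ x y : ℤ, 1 ≤ x → x ≤ (n : ℤ) → x < y → (x, y) ≠ (a, b) →
      (s (σ⁻¹ y) < s (σ⁻¹ x) ↔ σ⁻¹ y < σ⁻¹ x) := by
    intro x y hx1 hxn hxy hne'
    obtain ⟨hb1, hb2⟩ := hnotbad x y hx1 hxn hxy hne'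
    apply hkeyiff
    · intro h
      have := (σ⁻¹ : Equiv.Perm ℤ).injective h
      omega
    · exact hb2
    · exact hb1
  -- ascent/descent trichotomy
  have htrich : (σ⁻¹ a = σ⁻¹ b - 1 ∧ u < v) ∨ (σ⁻¹ a = σ⁻¹ b + 1 ∧ v < u) := by
    rcases hcase with ⟨h, hw', hW'⟩ | ⟨h, hw', hW'⟩
    · left
      refine ⟨?_, h⟩
      rw [hia, hib, hw', hW', hiu, hiv]; ring
    · right
      refine ⟨?_, h⟩
      rw [hia, hib, hw', hW', hiv, hiu]; ring
  -- set equalities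
  have hsetA : σ⁻¹ a = σ⁻¹ b - 1 → InvASet n (σ * s) = InvASet n σ ∪ {(a, b)} := by
    intro hcond
    ext ⟨x, y⟩
    simp only [InvASet, Set.mem_setOf_eq, Set.mem_union, Set.mem_singleton_iff, Prod.mk.injEq]
    constructor
    · rintro ⟨h1, h2, h3, h4⟩
      by_cases hp : (x, y) = ((a : ℤ), b)
      · right
        exact ⟨congrArg Prod.fst hp, congrArg Prod.snd hp⟩
      · left
        refine ⟨h1, h2, h3, ?_⟩
        rw [hmulinv, hmulinv] at h4
        exact (hmem x y h1 h2 h3 hp).mp h4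
    · rintro (⟨h1, h2, h3, h4⟩ | hp)
      · by_cases hp : (x, y) = ((a : ℤ), b)
        · exfalso
          have hx : x = a := congrArg Prod.fst hp
          have hy : y = b := congrArg Prod.snd hp
          rw [hx, hy] at h4
          omega
        · refine ⟨h1, h2, h3, ?_⟩
          rw [hmulinv, hmulinv]
          exact (hmem x y h1 h2 h3 hp).mpr h4
      · obtain ⟨hx, hy⟩ := hp
        subst hx; subst hy
        refine ⟨ha1, han, hab, ?_⟩
        rw [hmulinv, hmulinv, hsa, hsb]
        omega
  have hsetB : σ⁻¹ a = σ⁻¹ b + 1 → InvASet n (σ * s) = InvASet n σ \ {(a, b)} := by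
    intro hcond
    ext ⟨x, y⟩
    simp only [InvASet, Set.mem_setOf_eq, Set.mem_diff, Set.mem_singleton_iff, Prod.mk.injEq,
      not_and]
    constructor
    · rintro ⟨h1, h2, h3, h4⟩
      by_cases hp : (x, y) = ((a : ℤ), b)
      · exfalso
        have hx : x = a := congrArg Prod.fst hp
        have hy : y = b := congrArg Prod.snd hp
        rw [hx, hy, hmulinv, hmulinv, hsa, hsb] at h4
        omega
      · refine ⟨⟨h1, h2, h3, ?_⟩, ?_⟩
        · rw [hmulinv, hmulinv] at h4
          exact (hmem x y h1 h2 h3 hp).mp h4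
        · intro hx hy
          exact absurd (by rw [hx, hy]) hp
    · rintro ⟨⟨h1, h2, h3, h4⟩, hp⟩
      have hp' : (x, y) ≠ ((a : ℤ), b) := by
        intro h
        exact hp (congrArg Prod.fst h) (congrArg Prod.snd h)
      refine ⟨h1, h2, h3, ?_⟩
      rw [hmulinv, hmulinv]
      exact (hmem x y h1 h2 h3 hp').mpr h4
  refine ⟨a, b, ha1, han, hab, hswap, hfix, ?_, ?_⟩
  · intro hcond
    refine ⟨?_, hsetA hcond⟩
    have hnotmem : ((a : ℤ), b) ∉ InvASet n σ := by
      rintro ⟨-, -, -, h4⟩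
      simp only at h4
      omega
    unfold aLen
    rw [hsetA hcond, Set.union_singleton, Set.ncard_insert_of_notMem hnotmem hfin]
  · intro hcond
    have hcond' : σ⁻¹ a = σ⁻¹ b + 1 := by
      rcases htrich with ⟨h, -⟩ | ⟨h, -⟩
      · exact absurd h hcond
      · exact h
    refine ⟨?_, hsetB hcond'⟩
    have hmem' : ((a : ℤ), b) ∈ InvASet n σ := ⟨ha1, han, hab, by simp only; omega⟩
    unfold aLen
    rw [hsetB hcond']
    exact Set.ncard_diff_singleton_add_one hmem' hfin
end

section
/- For any valued digraph (G,θ), any set of generalized columns 𝒰 = (𝒰_z)_{z∈V}, and any initial section A, the formal power series Γ(A,𝒰) = Σ_f Π_{z∈A} x_{f(z)}, summed over all (A,𝒰)-semi-standard functions f, is a quasi-symmetric function: for any monomial x_{i_1}···x_{i_k} appearing in Γ(A,𝒰) and simple transposition s_j such that not both x_j and x_{j+1} appear in the monomial, the monomial and its image under swapping x_j, x_{j+1} have the same coefficient. -/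
open scoped Classical

variable {V : Type*}

/-- `f` is an `(A,𝒰)`-semi-standard function: `f : A → ℕ*` (extended by `0`
outside `A`) and there is an ordering `L ∈ PS_A(𝒢)` of `A` which is a valid
peeling order, along which `f` is weakly increasing, and strictly increasing
from `z` to any later element of the generalized column `𝒰_z`. -/
def IsSSF (E : V → V → Prop) (θ : V → ℕ) (U : V → Set V) (A : Finset V)
    (f : V → ℕ) : Prop :=
  (∀ z ∈ A, 1 ≤ f z) ∧ (∀ z ∉ A, f z = 0) ∧
    ∃ L : List V, PeelFrom E θ ∅ L ∧ L.toFinset = A ∧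
      L.Pairwise (fun z w => f z ≤ f w) ∧
      L.Pairwise (fun z w => w ∈ U z → f z < f w)

lemma swap_strict {j v x y : ℕ} (hv : v = j ∨ v = j + 1) (hxy : x < y)
    (hx : x ≠ v) (hy : y ≠ v) : Equiv.swap j (j+1) x < Equiv.swap j (j+1) y := by
  simp only [Equiv.swap_apply_def]
  split_ifs <;> omega

lemma isSSF_swap (E : V → V → Prop) (θ : V → ℕ) (U : V → Set V) (A : Finset V)
    (f : V → ℕ) (j v : ℕ) (hj : 1 ≤ j) (hv : v = j ∨ v = j+1)
    (hf : IsSSF E θ U A f) (hav : ∀ z, f z ≠ v) :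
    IsSSF E θ U A (fun z => Equiv.swap j (j+1) (f z)) := by
  obtain ⟨h1, h0, L, hL, hLA, hp1, hp2⟩ := hf
  refine ⟨?_, ?_, L, hL, hLA, ?_, ?_⟩
  · intro z hz
    have h1z := h1 z hz
    have h2z := hav z
    simp only [Equiv.swap_apply_def]
    split_ifs <;> omega
  · intro z hz
    simp only [h0 z hz]
    exact Equiv.swap_apply_of_ne_of_ne (by omega) (by omega)
  · refine hp1.imp ?_
    intro a b h
    rcases lt_or_eq_of_le h with h' | h'
    · exact le_of_lt (swap_strict hv h' (hav a) (hav b))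
    · exact le_of_eq (congrArg _ h')
  · refine hp2.imp ?_
    intro a b h hU
    exact swap_strict hv (h hU) (hav a) (hav b)

lemma avoid_of_count_zero (A : Finset V) (f : V → ℕ) (v : ℕ) (hv1 : 1 ≤ v)
    (h0 : ∀ z ∉ A, f z = 0) (hc : (A.filter fun z => f z = v).card = 0) :
    ∀ z, f z ≠ v := by
  intro z hz
  by_cases hzA : z ∈ A
  · have hmem : z ∈ A.filter fun z => f z = v := Finset.mem_filter.mpr ⟨hzA, hz⟩
    rw [Finset.card_eq_zero] at hc
    rw [hc] at hmem
    exact absurd hmem (Finset.notMem_empty z)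
  · have := h0 z hzA; omega

/-- the series `Γ(A,𝒰) = Σ_f Π_{z∈A} x_{f(z)}` is quasi-symmetric:
for any monomial (given by its exponent function `m` on the variables
`x_1, x_2, …`) and any `j ≥ 1` such that not both `x_j` and `x_{j+1}` occur in
it, the coefficient of the monomial equals the coefficient of the monomial
obtained by exchanging the variables `x_j` and `x_{j+1}`. -/
theorem gamma_quasiSymmetric (E : V → V → Prop) (θ : V → ℕ)
    (hac : Acyclic E) (hocv : IsOCV E θ) (U : V → Set V) (A : Finset V)
    (hA : IsInitialSection E θ A) (m : ℕ → ℕ) (j : ℕ) (hj : 1 ≤ j)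
    (hm : m j = 0 ∨ m (j + 1) = 0) :
    Set.ncard {f : V → ℕ | IsSSF E θ U A f ∧
        ∀ i : ℕ, (A.filter fun z => f z = i).card = m i}
      = Set.ncard {f : V → ℕ | IsSSF E θ U A f ∧
          ∀ i : ℕ, (A.filter fun z => f z = i).card = m (Equiv.swap j (j + 1) i)} := by
  obtain ⟨v, hv, hmv⟩ : ∃ v, (v = j ∨ v = j + 1) ∧ m v = 0 := by
    rcases hm with h | h
    · exact ⟨j, Or.inl rfl, h⟩
    · exact ⟨j + 1, Or.inr rfl, h⟩
  set σ := Equiv.swap j (j + 1) with hσ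
  have hσσ : ∀ x, σ (σ x) = x := fun x => Equiv.swap_apply_self _ _ x
  have hinvf : ∀ f : V → ℕ, (fun z => σ (σ (f z))) = f := by
    intro f; funext z; exact hσσ (f z)
  set Φ : (V → ℕ) → (V → ℕ) := fun f z => σ (f z) with hΦ
  have hΦΦ : ∀ f, Φ (Φ f) = f := fun f => hinvf f
  have hinj : Function.Injective Φ := Function.LeftInverse.injective hΦΦ
  have hv1 : 1 ≤ v := by omega
  have hσv : σ v = j ∨ σ v = j + 1 := by
    rcases hv with h | h <;> subst h
    · right; exact Equiv.swap_apply_left _ _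
    · left; exact Equiv.swap_apply_right _ _
  have hσv1 : 1 ≤ σ v := by omega
  have hcount : ∀ (f : V → ℕ) (i : ℕ),
      (A.filter fun z => Φ f z = i).card = (A.filter fun z => f z = σ i).card := by
    intro f i
    congr 1
    apply Finset.filter_congr
    intro z _
    simp only [hΦ]
    constructor
    · rintro rfl; exact (hσσ (f z)).symm
    · rintro h; rw [h, hσσ]
  have himg : Φ '' {f : V → ℕ | IsSSF E θ U A f ∧
        ∀ i : ℕ, (A.filter fun z => f z = i).card = m i}
      = {f : V → ℕ | IsSSF E θ U A f ∧
          ∀ i : ℕ, (A.filter fun z => f z = i).card = m (Equiv.swap j (j + 1) i)} := by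
    ext g
    constructor
    · rintro ⟨f, ⟨hssf, hcont⟩, rfl⟩
      have hav : ∀ z, f z ≠ v :=
        avoid_of_count_zero A f v hv1 hssf.2.1 (by rw [hcont v, hmv])
      refine ⟨isSSF_swap E θ U A f j v hj hv hssf hav, fun i => ?_⟩
      rw [hcount f i, hcont (σ i)]
    · rintro ⟨hssf, hcont⟩
      have hav : ∀ z, g z ≠ σ v := by
        refine avoid_of_count_zero A g (σ v) hσv1 hssf.2.1 ?_
        rw [hcont (σ v)]
        show m (σ (σ v)) = 0
        rw [hσσ, hmv]
      refine ⟨Φ g, ⟨?_, fun i => ?_⟩, hΦΦ g⟩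
      · exact isSSF_swap E θ U A g j (σ v) hj hσv hssf hav
      · rw [hcount g i]
        have := hcont (σ i)
        rw [this]
        show m (σ (σ i)) = m i
        rw [hσσ]
  rw [← himg, Set.ncard_image_of_injective _ hinj]
end
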